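/- arXiv:0706.2840 — 4 statements merged into one kernel-verified Lean document; each statement's English description precedes it below -/
import Mathlib

section
/- With a = 1 and b = 2π/ln 2, both real series ∑_{n=1}^∞ ((-1)^n/n)·cos(b·ln n) and ∑_{n=1}^∞ ((-1)^n/n)·sin(b·ln n) converge and equal 0. -/
open Filter Topology

noncomputable section HavilAux

namespace HavilAux

def b : ℝ := 2 * Real.pi / Real.log 2
def c : ℂ := (b : ℂ) * Complex.I

def f (x : ℝ) : ℂ := Complex.exp (c * Real.log x) / x
def E (x : ℝ) : ℂ := Complex.exp (c * Real.log x) / c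

lemma log2_pos : (0:ℝ) < Real.log 2 := Real.log_pos one_lt_two

lemma b_pos : 0 < b := div_pos (by positivity) log2_pos

lemma c_ne : c ≠ 0 :=
  mul_ne_zero (Complex.ofReal_ne_zero.2 b_pos.ne') Complex.I_ne_zero

lemma c_key : Complex.exp (c * Real.log 2) = 1 := by
  have h2 : (Real.log 2 : ℂ) ≠ 0 := Complex.ofReal_ne_zero.2 log2_pos.ne'
  have hb : b * Real.log 2 = 2 * Real.pi := by
    rw [b]; field_simp
  have h : c * (Real.log 2 : ℂ) = ((b * Real.log 2 : ℝ) : ℂ) * Complex.I := by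
    simp only [c, Complex.ofReal_mul]; ring
  rw [h, hb]
  push_cast
  exact Complex.exp_two_pi_mul_I

lemma abs_exp_c (r : ℝ) : ‖Complex.exp (c * r)‖ = 1 := by
  have h : c * (r : ℂ) = ((b * r : ℝ) : ℂ) * Complex.I := by
    simp only [c]; push_cast; ring
  rw [h, Complex.norm_exp_ofReal_mul_I]

lemma norm_f (x : ℝ) (hx : 0 < x) : ‖f x‖ = x⁻¹ := by
  simp only [f, norm_div, abs_exp_c]
  rw [Complex.norm_real, Real.norm_eq_abs, abs_of_pos hx, one_div]

lemma f_half (x : ℝ) (hx : 0 < x) : f (2 * x) = f x / 2 := by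
  have hlog : Real.log (2 * x) = Real.log 2 + Real.log x :=
    Real.log_mul two_ne_zero hx.ne'
  simp only [f, hlog]
  push_cast
  rw [mul_add, Complex.exp_add, c_key, one_mul]
  ring

lemma E_double (x : ℝ) (hx : 0 < x) : E (2 * x) = E x := by
  have hlog : Real.log (2 * x) = Real.log 2 + Real.log x :=
    Real.log_mul two_ne_zero hx.ne'
  simp only [E, hlog]
  push_cast
  rw [mul_add, Complex.exp_add, c_key, one_mul]

lemma hasDerivAt_exp_c (x : ℝ) (hx : 0 < x) :
    HasDerivAt (fun y : ℝ => Complex.exp (c * Real.log y))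
      (Complex.exp (c * Real.log x) * (c * (x : ℂ)⁻¹)) x := by
  have h1 : HasDerivAt (fun y : ℝ => ((Real.log y : ℝ) : ℂ)) ((x⁻¹ : ℝ) : ℂ) x :=
    (Real.hasDerivAt_log hx.ne').ofReal_comp
  have h2 := (h1.const_mul c).cexp
  convert h2 using 1
  push_cast
  ring

lemma hasDerivAt_E (x : ℝ) (hx : 0 < x) : HasDerivAt E (f x) x := by
  have h := (hasDerivAt_exp_c x hx).div_const c
  have hE : E = fun y : ℝ => Complex.exp (c * Real.log y) / c := rfl
  rw [hE]
  convert h using 1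
  · rfl
  have hx' : (x : ℂ) ≠ 0 := Complex.ofReal_ne_zero.2 hx.ne'
  simp only [f]
  field_simp [c_ne]

lemma hasDerivAt_f (x : ℝ) (hx : 0 < x) :
    HasDerivAt f ((c - 1) * Complex.exp (c * Real.log x) / (x : ℂ) ^ 2) x := by
  have hx' : (x : ℂ) ≠ 0 := Complex.ofReal_ne_zero.2 hx.ne'
  have h1 : HasDerivAt (fun y : ℝ => ((y : ℝ) : ℂ)) ((1 : ℝ) : ℂ) x :=
    (hasDerivAt_id x).ofReal_comp
  have h2' : HasDerivAt (fun y : ℝ => ((y⁻¹ : ℝ) : ℂ)) ((-(x^2)⁻¹ : ℝ) : ℂ) x :=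
    (hasDerivAt_inv hx.ne').ofReal_comp
  have h2 : HasDerivAt (fun y : ℝ => ((y : ℂ))⁻¹) ((-(x^2)⁻¹ : ℝ) : ℂ) x := by
    simpa only [Complex.ofReal_inv] using h2'
  have h3 := (hasDerivAt_exp_c x hx).mul h2
  have hf : f = fun y : ℝ => Complex.exp (c * Real.log y) * ((y : ℂ))⁻¹ := by
    funext y; simp [f, div_eq_mul_inv]
  rw [hf]
  convert h3 using 1
  · rfl
  · rfl
  push_cast
  field_simp
  ring

lemma norm_deriv_f (x : ℝ) (hx : 0 < x) :
    ‖(c - 1) * Complex.exp (c * Real.log x) / (x : ℂ) ^ 2‖ = ‖c - 1‖ / x ^ 2 := by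
  rw [norm_div, norm_mul]
  simp only [abs_exp_c, mul_one]
  congr 1
  rw [norm_pow, Complex.norm_real, Real.norm_eq_abs, abs_of_pos hx]

lemma term_bound (N m : ℕ) (hN : 1 ≤ N) (hm : N ≤ m) :
    ‖(E ((m : ℝ) + 1) - E (m : ℝ)) - f ((m : ℝ) + 1)‖ ≤ ‖c - 1‖ / (N : ℝ) ^ 2 := by
  set K : ℝ := ‖c - 1‖ / (N : ℝ) ^ 2 with hK
  have hNpos : (0:ℝ) < N := by exact_mod_cast hN
  have hs : Convex ℝ (Set.Icc (m : ℝ) ((m : ℝ) + 1)) := convex_Icc _ _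
  have hpos : ∀ x ∈ Set.Icc (m : ℝ) ((m : ℝ) + 1), 0 < x := by
    intro x hx
    have : (N : ℝ) ≤ m := by exact_mod_cast hm
    linarith [hx.1]
  -- Lipschitz bound for f on the interval
  have hbound : ∀ x ∈ Set.Icc (m : ℝ) ((m : ℝ) + 1),
      ‖(c - 1) * Complex.exp (c * Real.log x) / (x : ℂ) ^ 2‖ ≤ K := by
    intro x hx
    rw [norm_deriv_f x (hpos x hx)]
    have hxN : (N : ℝ) ≤ x := by
      have : (N : ℝ) ≤ m := by exact_mod_cast hm
      linarith [hx.1]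
    exact div_le_div_of_nonneg_left (norm_nonneg _) (by positivity)
      (pow_le_pow_left₀ hNpos.le hxN 2)
  -- f is K-Lipschitz on the interval
  have hfd : ∀ y ∈ Set.Icc (m : ℝ) ((m : ℝ) + 1),
      HasDerivWithinAt f ((c - 1) * Complex.exp (c * Real.log y) / (y : ℂ) ^ 2)
        (Set.Icc (m : ℝ) ((m : ℝ) + 1)) y :=
    fun y hy => (hasDerivAt_f y (hpos y hy)).hasDerivWithinAt
  have hKnn : 0 ≤ K := by positivity
  have hlip : ∀ y ∈ Set.Icc (m : ℝ) ((m : ℝ) + 1), ‖f y - f ((m : ℝ) + 1)‖ ≤ K := by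
    intro y hy
    have h := hs.norm_image_sub_le_of_norm_hasDerivWithin_le hfd hbound
      (Set.right_mem_Icc.2 (by linarith)) hy
    obtain ⟨hy1, hy2⟩ := hy
    have h1 : ‖y - ((m : ℝ) + 1)‖ ≤ 1 := by
      rw [Real.norm_eq_abs, abs_le]
      constructor
      · linarith
      · linarith
    calc ‖f y - f ((m : ℝ) + 1)‖ ≤ K * ‖y - ((m : ℝ) + 1)‖ := h
      _ ≤ K * 1 := by nlinarith [norm_nonneg (y - ((m : ℝ) + 1))]
      _ = K := mul_one K
  set g : ℝ → ℂ := fun y => E y - f ((m : ℝ) + 1) * y with hg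
  have hgd : ∀ y ∈ Set.Icc (m : ℝ) ((m : ℝ) + 1),
      HasDerivWithinAt g (f y - f ((m : ℝ) + 1)) (Set.Icc (m : ℝ) ((m : ℝ) + 1)) y := by
    intro y hy
    have d1 := hasDerivAt_E y (hpos y hy)
    have d2 : HasDerivAt (fun y : ℝ => f ((m : ℝ) + 1) * (y : ℂ)) (f ((m : ℝ) + 1)) y := by
      simpa using ((hasDerivAt_id y).ofReal_comp.const_mul (f ((m : ℝ) + 1)))
    exact (d1.sub d2).hasDerivWithinAt
  have hfin := hs.norm_image_sub_le_of_norm_hasDerivWithin_le hgd hlip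
    (Set.left_mem_Icc.2 (by linarith)) (Set.right_mem_Icc.2 (by linarith))
  have hval : g ((m : ℝ) + 1) - g (m : ℝ) = (E ((m : ℝ) + 1) - E (m : ℝ)) - f ((m : ℝ) + 1) := by
    simp only [hg]; push_cast; ring
  have hnrm : ‖((m : ℝ) + 1) - (m : ℝ)‖ = 1 := by simp
  rw [← hval]
  calc ‖g ((m : ℝ) + 1) - g (m : ℝ)‖ ≤ K * ‖((m : ℝ) + 1) - (m : ℝ)‖ := hfin
    _ = K := by rw [hnrm, mul_one]

lemma block_bound (N : ℕ) (hN : 1 ≤ N) :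
    ‖∑ m ∈ Finset.Ico N (2 * N), f ((m : ℝ) + 1)‖ ≤ ‖c - 1‖ / N := by
  have hNpos : (0:ℝ) < N := by exact_mod_cast hN
  have htel : ∑ m ∈ Finset.Ico N (2 * N), (E ((m : ℝ) + 1) - E (m : ℝ)) = 0 := by
    rw [Finset.sum_Ico_eq_sum_range]
    have h2 : 2 * N - N = N := by omega
    rw [h2]
    have heq : ∀ k ∈ Finset.range N,
        (E ((((N + k : ℕ)) : ℝ) + 1) - E (((N + k : ℕ)) : ℝ)) =
        (fun i => E (((N + i : ℕ) : ℝ))) (k + 1) - (fun i => E (((N + i : ℕ) : ℝ))) k := by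
      intro k _
      simp only []
      congr 2 <;> push_cast <;> ring
    rw [Finset.sum_congr rfl heq, Finset.sum_range_sub (fun i => E (((N + i : ℕ) : ℝ))) N]
    have hdd : (((N + N : ℕ)) : ℝ) = 2 * ((N : ℕ) : ℝ) := by push_cast; ring
    rw [hdd, E_double _ hNpos]
    simp
  have hsum : ∑ m ∈ Finset.Ico N (2 * N), f ((m : ℝ) + 1)
      = ∑ m ∈ Finset.Ico N (2 * N), (f ((m : ℝ) + 1) - (E ((m : ℝ) + 1) - E (m : ℝ))) := by
    rw [Finset.sum_sub_distrib, htel, sub_zero]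
  rw [hsum]
  have hbound : ∀ m ∈ Finset.Ico N (2 * N),
      ‖f ((m : ℝ) + 1) - (E ((m : ℝ) + 1) - E (m : ℝ))‖ ≤ ‖c - 1‖ / (N : ℝ) ^ 2 := by
    intro m hm
    rw [norm_sub_rev]
    exact term_bound N m hN (Finset.mem_Ico.1 hm).1
  calc ‖∑ m ∈ Finset.Ico N (2 * N), (f ((m : ℝ) + 1) - (E ((m : ℝ) + 1) - E (m : ℝ)))‖
      ≤ ∑ m ∈ Finset.Ico N (2 * N), ‖f ((m : ℝ) + 1) - (E ((m : ℝ) + 1) - E (m : ℝ))‖ :=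
        norm_sum_le _ _
    _ ≤ ∑ _m ∈ Finset.Ico N (2 * N), ‖c - 1‖ / (N : ℝ) ^ 2 := Finset.sum_le_sum hbound
    _ = (N : ℝ) * (‖c - 1‖ / (N : ℝ) ^ 2) := by
        rw [Finset.sum_const, Nat.card_Ico]
        have : 2 * N - N = N := by omega
        rw [this, nsmul_eq_mul]
    _ = ‖c - 1‖ / N := by field_simp

def A (M : ℕ) : ℂ := ∑ n ∈ Finset.range M, (-1 : ℂ) ^ (n + 1) * f ((n : ℝ) + 1)
def P (M : ℕ) : ℂ := ∑ n ∈ Finset.range M, f ((n : ℝ) + 1)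

lemma A_even (N : ℕ) : A (2 * N) = P N - P (2 * N) := by
  induction N with
  | zero => simp [A, P]
  | succ N ih =>
    have h2 : 2 * (N + 1) = (2 * N + 1) + 1 := by ring
    rw [h2]
    simp only [A, P, Finset.sum_range_succ] at *
    have e1 : (-1 : ℂ) ^ (2 * N + 1) = -1 := by
      rw [pow_succ, pow_mul]; norm_num
    have e2 : (-1 : ℂ) ^ (2 * N + 1 + 1) = 1 := by
      rw [pow_succ, e1]; norm_num
    have hhalf : f (2 * (((N : ℕ) : ℝ) + 1)) = f (((N : ℕ) : ℝ) + 1) / 2 :=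
      f_half _ (by positivity)
    have hcast : (((2 * N + 1 : ℕ)) : ℝ) + 1 = 2 * (((N : ℕ) : ℝ) + 1) := by push_cast; ring
    rw [ih, e1, e2, hcast, hhalf]
    push_cast
    ring

lemma norm_A_even (N : ℕ) (hN : 1 ≤ N) : ‖A (2 * N)‖ ≤ ‖c - 1‖ / N := by
  have h : A (2 * N) = -∑ m ∈ Finset.Ico N (2 * N), f ((m : ℝ) + 1) := by
    rw [A_even, Finset.sum_Ico_eq_sub _ (by omega : N ≤ 2 * N)]
    simp only [P]
    ring
  rw [h, norm_neg]
  exact block_bound N hN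

lemma A_tendsto : Tendsto A atTop (𝓝 0) := by
  apply squeeze_zero_norm' (a := fun M : ℕ => (‖c - 1‖ + 1) * (((M / 2 : ℕ)) : ℝ)⁻¹)
  · filter_upwards [eventually_ge_atTop 2] with M hM
    have hcne : (0:ℝ) ≤ ‖c - 1‖ := norm_nonneg _
    rcases Nat.even_or_odd M with ⟨N, hMN⟩ | ⟨N, hMN⟩
    · have hN : 1 ≤ N := by omega
      have hNpos : (0:ℝ) < N := by exact_mod_cast hN
      have hM2 : M / 2 = N := by omega
      have hMe : M = 2 * N := by omega
      rw [hMe]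
      have h22 : 2 * N / 2 = N := by omega
      rw [h22]
      calc ‖A (2 * N)‖ ≤ ‖c - 1‖ / N := norm_A_even N hN
        _ ≤ (‖c - 1‖ + 1) * ((N : ℝ))⁻¹ := by
            rw [div_eq_mul_inv]
            have : (0:ℝ) ≤ ((N:ℝ))⁻¹ := by positivity
            nlinarith
    · have hN : 1 ≤ N := by omega
      have hNpos : (0:ℝ) < N := by exact_mod_cast hN
      have hM2 : M / 2 = N := by omega
      have hMe : M = 2 * N + 1 := by omega
      have hstep : A (2 * N + 1) = A (2 * N) + (-1 : ℂ) ^ (2 * N + 1) * f (((2 * N : ℕ) : ℝ) + 1) := by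
        simp only [A, Finset.sum_range_succ]
      have hfn : ‖f (((2 * N : ℕ) : ℝ) + 1)‖ ≤ ((N : ℝ))⁻¹ := by
        rw [norm_f _ (by positivity)]
        rw [inv_le_inv₀ (by positivity) hNpos]
        push_cast; linarith
      have he1 : ‖(-1 : ℂ) ^ (2 * N + 1)‖ = 1 := by
        rw [norm_pow, norm_neg, norm_one, one_pow]
      rw [hMe]
      have h22 : (2 * N + 1) / 2 = N := by omega
      rw [h22, hstep]
      calc ‖A (2 * N) + (-1 : ℂ) ^ (2 * N + 1) * f (((2 * N : ℕ) : ℝ) + 1)‖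
          ≤ ‖A (2 * N)‖ + ‖(-1 : ℂ) ^ (2 * N + 1) * f (((2 * N : ℕ) : ℝ) + 1)‖ := norm_add_le _ _
        _ ≤ ‖c - 1‖ / N + ((N : ℝ))⁻¹ := by
            rw [norm_mul, he1, one_mul]
            exact add_le_add (norm_A_even N hN) hfn
        _ = (‖c - 1‖ + 1) * ((N : ℝ))⁻¹ := by
            rw [div_eq_mul_inv]; ring
  · have hdiv : Tendsto (fun M : ℕ => M / 2) atTop atTop :=
      tendsto_atTop_atTop.2 fun b => ⟨2 * b, fun a ha => by omega⟩
    have h1 : Tendsto (fun M : ℕ => (((M / 2 : ℕ)) : ℝ)) atTop atTop :=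
      tendsto_natCast_atTop_atTop.comp hdiv
    have h2 := h1.inv_tendsto_atTop
    have := h2.const_mul (‖c - 1‖ + 1)
    simpa using this

lemma term_re (n : ℕ) :
    ((-1 : ℂ) ^ (n + 1) * f ((n : ℝ) + 1)).re
      = ((-1 : ℝ) ^ (n + 1) / ((n : ℝ) + 1)) * Real.cos (b * Real.log ((n : ℝ) + 1)) ∧
    ((-1 : ℂ) ^ (n + 1) * f ((n : ℝ) + 1)).im
      = ((-1 : ℝ) ^ (n + 1) / ((n : ℝ) + 1)) * Real.sin (b * Real.log ((n : ℝ) + 1)) := by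
  have harg : c * ((Real.log ((n : ℝ) + 1) : ℝ) : ℂ)
      = ((b * Real.log ((n : ℝ) + 1) : ℝ) : ℂ) * Complex.I := by
    simp only [c, Complex.ofReal_mul]; ring
  have hterm : (-1 : ℂ) ^ (n + 1) * f ((n : ℝ) + 1)
      = ((((-1 : ℝ)) ^ (n + 1) / ((n : ℝ) + 1) : ℝ) : ℂ)
        * Complex.exp (((b * Real.log ((n : ℝ) + 1) : ℝ) : ℂ) * Complex.I) := by
    simp only [f, harg]
    push_cast
    ring
  rw [hterm, Complex.re_ofReal_mul, Complex.im_ofReal_mul,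
    Complex.exp_ofReal_mul_I_re, Complex.exp_ofReal_mul_I_im]
  exact ⟨rfl, rfl⟩

end HavilAux

end HavilAux

open HavilAux in
theorem counterexample_series_vanish :
    Tendsto (fun N : ℕ => ∑ n ∈ Finset.range N,
        ((-1 : ℝ) ^ (n + 1) / ((n : ℝ) + 1)) *
          Real.cos ((2 * Real.pi / Real.log 2) * Real.log ((n : ℝ) + 1)))
      atTop (𝓝 0) ∧
    Tendsto (fun N : ℕ => ∑ n ∈ Finset.range N,
        ((-1 : ℝ) ^ (n + 1) / ((n : ℝ) + 1)) *
          Real.sin ((2 * Real.pi / Real.log 2) * Real.log ((n : ℝ) + 1)))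
      atTop (𝓝 0) := by
  have hb : (2 * Real.pi / Real.log 2) = b := rfl
  constructor
  · have h := (Complex.continuous_re.tendsto 0).comp A_tendsto
    simp only [Complex.zero_re, Function.comp_def] at h
    convert h using 2 with M
    rw [hb]
    simp only [A, Complex.re_sum]
    exact Finset.sum_congr rfl fun n _ => ((term_re n).1).symm
  · have h := (Complex.continuous_im.tendsto 0).comp A_tendsto
    simp only [Complex.zero_im, Function.comp_def] at h
    convert h using 2 with M
    rw [hb]
    simp only [A, Complex.im_sum]
    exact Finset.sum_congr rfl fun n _ => ((term_re n).2).symm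
end

section
/- Havil's Conjecture is false: there exist real numbers a and b with a ≠ 1/2 such that ∑_{n=1}^∞ ((-1)^n/n^a)·cos(b·ln n) = 0 and ∑_{n=1}^∞ ((-1)^n/n^a)·sin(b·ln n) = 0. -/
open Filter Topology Complex

-- derivative of real-to-complex cpow
lemma hv_deriv (c : ℂ) {x : ℝ} (hx : 0 < x) :
    HasDerivAt (fun y : ℝ => (y : ℂ) ^ c) (c * (x : ℂ) ^ (c - 1)) x := by
  exact (Complex.hasStrictDerivAt_cpow_const (c := c)
    (ofReal_mem_slitPlane.2 hx)).hasDerivAt.comp_ofReal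

-- MVT bound for cpow
lemma hv_mvt {c : ℂ} (hc : c.re ≤ 1) {a b : ℝ} (ha : 0 < a) (hab : a ≤ b) :
    ‖(b : ℂ) ^ c - (a : ℂ) ^ c‖ ≤ (‖c‖ * a ^ (c.re - 1)) * (b - a) := by
  have key := Convex.norm_image_sub_le_of_norm_hasDerivWithin_le
    (f := fun y : ℝ => (y : ℂ) ^ c) (f' := fun y : ℝ => c * (y : ℂ) ^ (c - 1))
    (s := Set.Icc a b) (C := ‖c‖ * a ^ (c.re - 1))
    (fun x hx => (hv_deriv c (lt_of_lt_of_le ha hx.1)).hasDerivWithinAt)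
    (fun x hx => by
      have hxpos : 0 < x := lt_of_lt_of_le ha hx.1
      rw [norm_mul]
      gcongr
      rw [Complex.norm_cpow_eq_rpow_re_of_pos hxpos]
      have : (c - 1).re = c.re - 1 := by simp
      rw [this]
      exact Real.rpow_le_rpow_of_nonpos ha hx.1 (by linarith))
    (convex_Icc a b) (Set.left_mem_Icc.2 hab) (Set.right_mem_Icc.2 hab)
  simpa [Real.norm_eq_abs, _root_.abs_of_nonneg (sub_nonneg.2 hab)] using key

lemma hv_step {s : ℂ} (hs : s.re = 0) {a : ℝ} (ha : 1 ≤ a) :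
    ‖((a + 1 : ℝ) : ℂ) ^ s - (a : ℂ) ^ s - s * ((a + 1 : ℝ) : ℂ) ^ (s - 1)‖ ≤
      ‖s‖ * ‖s - 1‖ * a ^ (-2 : ℝ) := by
  have ha0 : (0:ℝ) < a := lt_of_lt_of_le one_pos ha
  set d : ℂ := s * ((a + 1 : ℝ) : ℂ) ^ (s - 1) with hd
  have key := Convex.norm_image_sub_le_of_norm_hasDerivWithin_le
    (f := fun y : ℝ => (y : ℂ) ^ s - d * y)
    (f' := fun y : ℝ => s * (y : ℂ) ^ (s - 1) - d)
    (s := Set.Icc a (a + 1)) (C := ‖s‖ * ‖s - 1‖ * a ^ (-2 : ℝ))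
    (fun x hx => ((hv_deriv s (lt_of_lt_of_le ha0 hx.1)).sub
      (by simpa using (Complex.ofRealCLM.hasDerivAt (x := x)).const_mul d)).hasDerivWithinAt)
    (fun x hx => by
      have hxpos : (0:ℝ) < x := lt_of_lt_of_le ha0 hx.1
      have h1 : s * (x : ℂ) ^ (s - 1) - d = -(s * (((a+1:ℝ) : ℂ) ^ (s-1) - (x : ℂ) ^ (s-1))) := by
        rw [hd]; ring
      rw [show ‖(fun y : ℝ => s * (y:ℂ) ^ (s-1) - d) x‖ = ‖s * (x:ℂ) ^ (s-1) - d‖ from rfl,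
        h1, norm_neg, norm_mul]
      have h2 := hv_mvt (c := s - 1) (by simp [hs]) hxpos hx.2
      have h3 : (s-1).re - 1 = -2 := by simp [hs]; ring
      rw [h3] at h2
      have h4 : x ^ (-2:ℝ) ≤ a ^ (-2:ℝ) :=
        Real.rpow_le_rpow_of_nonpos ha0 hx.1 (by norm_num)
      have h5 : a + 1 - x ≤ 1 := by linarith [hx.1]
      have hx2 : (0:ℝ) ≤ x ^ (-2:ℝ) := Real.rpow_nonneg hxpos.le _
      have hax : 0 ≤ a + 1 - x := by linarith [hx.2]
      have h6 : ‖s-1‖ * x ^ (-2:ℝ) * (a + 1 - x) ≤ ‖s-1‖ * a ^ (-2:ℝ) := by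
        have k1 := mul_le_mul_of_nonneg_left h5 (mul_nonneg (norm_nonneg (s-1)) hx2)
        have k2 := mul_le_mul_of_nonneg_left h4 (norm_nonneg (s-1))
        linarith
      calc ‖s‖ * ‖((a+1:ℝ) : ℂ) ^ (s-1) - (x : ℂ) ^ (s-1)‖
          ≤ ‖s‖ * (‖s-1‖ * x ^ (-2:ℝ) * (a + 1 - x)) :=
            mul_le_mul_of_nonneg_left h2 (norm_nonneg s)
        _ ≤ ‖s‖ * (‖s-1‖ * a ^ (-2:ℝ)) := mul_le_mul_of_nonneg_left h6 (norm_nonneg s)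
        _ = ‖s‖ * ‖s-1‖ * a ^ (-2:ℝ) := by ring)
    (convex_Icc a (a+1)) (Set.left_mem_Icc.2 (by linarith)) (Set.right_mem_Icc.2 (by linarith))
  have : ((a + 1 : ℝ) : ℂ) ^ s - d * (a + 1 : ℝ) - ((a : ℂ) ^ s - d * a) =
      ((a + 1 : ℝ) : ℂ) ^ s - (a : ℂ) ^ s - d := by push_cast; ring
  rw [this] at key
  simpa using key


section
variable {s : ℂ}

lemma hv_f_half (hre : s.re = 0) (h2 : (2:ℂ) ^ s = 1) (m : ℕ) :
    ((2 * m : ℕ) : ℂ) ^ (s - 1) = ((m : ℕ) : ℂ) ^ (s - 1) / 2 := by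
  have hs1 : s - 1 ≠ 0 := fun h => by
    have := congrArg Complex.re h; simp [hre] at this
  rcases Nat.eq_zero_or_pos m with hm | hm
  · simp [hm, Complex.zero_cpow hs1]
  have : ((2 * m : ℕ) : ℂ) = (((2:ℝ) : ℂ)) * (((m : ℝ)) : ℂ) := by push_cast; ring
  rw [this, Complex.mul_cpow_ofReal_nonneg (by norm_num : (0:ℝ) ≤ 2) (Nat.cast_nonneg m)]
  have h22 : ((2:ℝ) : ℂ) = (2 : ℂ) := by norm_num
  rw [h22, Complex.cpow_sub _ _ (by norm_num), h2, Complex.cpow_one]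
  push_cast
  ring

lemma hv_alt_eq (hre : s.re = 0) (h2 : (2:ℂ) ^ s = 1) (N : ℕ) :
    ∑ n ∈ Finset.range N, (-1 : ℂ) ^ (n + 1) * ((n + 1 : ℕ) : ℂ) ^ (s - 1) =
      ∑ k ∈ Finset.range (N / 2), ((k + 1 : ℕ) : ℂ) ^ (s - 1) -
      ∑ k ∈ Finset.range N, ((k + 1 : ℕ) : ℂ) ^ (s - 1) := by
  induction N with
  | zero => simp
  | succ N ih =>
    rw [Finset.sum_range_succ, ih, Finset.sum_range_succ (fun k => ((k + 1 : ℕ) : ℂ) ^ (s - 1))]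
    rcases Nat.even_or_odd N with hN | hN
    · obtain ⟨m, hm⟩ := hN
      have hdiv : (N + 1) / 2 = N / 2 := by omega
      have hpow : (-1 : ℂ) ^ (N + 1) = -1 := (show Odd (N+1) from ⟨m, by omega⟩).neg_one_pow
      rw [hdiv, hpow]; ring
    · obtain ⟨m, hm⟩ := hN
      have hdiv : (N + 1) / 2 = N / 2 + 1 := by omega
      have hpow : (-1 : ℂ) ^ (N + 1) = 1 := by
        exact (show Even (N+1) from ⟨m + 1, by omega⟩).neg_one_pow
      have hhalf : ((N + 1 : ℕ) : ℂ) ^ (s - 1) = ((N / 2 + 1 : ℕ) : ℂ) ^ (s - 1) / 2 := by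
        have h1 : (N + 1 : ℕ) = 2 * (N / 2 + 1) := by omega
        rw [h1, hv_f_half hre h2]
      rw [hdiv, hpow, Finset.sum_range_succ (fun k => ((k + 1 : ℕ) : ℂ) ^ (s - 1)), hhalf]
      ring

end

section
variable {s : ℂ}

noncomputable def hvc (s : ℂ) (k : ℕ) : ℂ :=
  ((k + 1 : ℕ) : ℂ) ^ (s - 1) - (((k + 1 : ℕ) : ℂ) ^ s - ((k : ℕ) : ℂ) ^ s) / s

lemma hv_T_eq (hs0 : s ≠ 0) (N : ℕ) :
    ∑ k ∈ Finset.range N, ((k + 1 : ℕ) : ℂ) ^ (s - 1) =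
      ((N : ℕ) : ℂ) ^ s / s + ∑ k ∈ Finset.range N, hvc s k := by
  unfold hvc
  rw [Finset.sum_sub_distrib, ← Finset.sum_div,
    Finset.sum_range_sub (fun k => ((k : ℕ) : ℂ) ^ s)]
  simp [Complex.zero_cpow hs0]

lemma hv_c_bound (hre : s.re = 0) (hs0 : s ≠ 0) {k : ℕ} (hk : 1 ≤ k) :
    ‖hvc s k‖ ≤ ‖s - 1‖ * (1 / (k : ℝ) ^ 2) := by
  have hk1 : (1 : ℝ) ≤ (k : ℝ) := by exact_mod_cast hk
  have hcast : ((k + 1 : ℕ) : ℂ) = (((k : ℝ) + 1 : ℝ) : ℂ) := by push_cast; ring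
  have heq : hvc s k = -((((k : ℝ) + 1 : ℝ) : ℂ) ^ s - ((k : ℝ) : ℂ) ^ s -
      s * (((k : ℝ) + 1 : ℝ) : ℂ) ^ (s - 1)) / s := by
    unfold hvc
    rw [hcast]
    have : (((k : ℕ)) : ℂ) = (((k : ℝ)) : ℂ) := by push_cast; ring
    rw [this]
    field_simp
    ring
  rw [heq, norm_div, norm_neg]
  have hstep := hv_step hre hk1
  have hnorm_s : 0 < ‖s‖ := norm_pos_iff.2 hs0
  rw [div_le_iff₀ hnorm_s]
  have hpow : ((k:ℝ)) ^ (-2 : ℝ) = 1 / (k : ℝ) ^ 2 := by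
    rw [show (-2:ℝ) = -((2:ℕ):ℝ) by norm_num, Real.rpow_neg (by linarith),
      Real.rpow_natCast, one_div]
  calc ‖(((k : ℝ) + 1 : ℝ) : ℂ) ^ s - ((k : ℝ) : ℂ) ^ s - s * (((k : ℝ) + 1 : ℝ) : ℂ) ^ (s - 1)‖
      ≤ ‖s‖ * ‖s - 1‖ * (k:ℝ) ^ (-2 : ℝ) := hstep
    _ = ‖s - 1‖ * (1 / (k : ℝ) ^ 2) * ‖s‖ := by rw [hpow]; ring

lemma hv_c_summable (hre : s.re = 0) (hs0 : s ≠ 0) : Summable (hvc s) := by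
  apply Summable.of_norm_bounded_eventually_nat (g := fun k => ‖s - 1‖ * (1 / (k : ℝ) ^ 2))
  · exact (Real.summable_one_div_nat_pow.2 one_lt_two).mul_left _
  · filter_upwards [eventually_ge_atTop 1] with k hk
    exact hv_c_bound hre hs0 hk

lemma hv_eta_zero (hre : s.re = 0) (hs0 : s ≠ 0) (h2 : (2:ℂ) ^ s = 1) :
    Tendsto (fun N : ℕ => ∑ n ∈ Finset.range N,
      (-1 : ℂ) ^ (n + 1) * ((n + 1 : ℕ) : ℂ) ^ (s - 1)) atTop (𝓝 0) := by
  have hdiv : Tendsto (fun N : ℕ => N / 2) atTop atTop :=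
    Filter.tendsto_atTop_atTop.2 fun b => ⟨2 * b, fun n hn => by omega⟩
  obtain ⟨L, hL⟩ := hv_c_summable hre hs0
  have hC : Tendsto (fun N : ℕ => ∑ k ∈ Finset.range N, hvc s k) atTop (𝓝 L) :=
    hL.tendsto_sum_nat
  have part1 : Tendsto (fun N : ℕ => (∑ k ∈ Finset.range (N / 2), hvc s k) -
      ∑ k ∈ Finset.range N, hvc s k) atTop (𝓝 0) := by
    simpa using (hC.comp hdiv).sub hC
  have part2 : Tendsto (fun N : ℕ => ((N / 2 : ℕ) : ℂ) ^ s / s - ((N : ℕ) : ℂ) ^ s / s)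
      atTop (𝓝 0) := by
    apply squeeze_zero_norm' (a := fun N : ℕ => (((N / 2 : ℕ) : ℝ))⁻¹)
    · filter_upwards [eventually_ge_atTop 2] with N hN
      set m : ℕ := N / 2 with hm
      have hm1 : 1 ≤ m := by omega
      have hm1' : (1:ℝ) ≤ (m:ℝ) := by exact_mod_cast hm1
      have hmN : (m : ℝ) ≤ (N : ℝ) / 2 := by
        rw [le_div_iff₀ (by norm_num)]
        exact_mod_cast Nat.div_mul_le_self N 2
      have hNm : (N : ℝ) / 2 ≤ (m : ℝ) + 1 := by
        rw [div_le_iff₀ (by norm_num : (0:ℝ) < 2)]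
        have h9 : (N:ℝ) < 2 * ((m:ℝ) + 1) := by exact_mod_cast (by omega : N < 2 * (m + 1))
        linarith
      have hNs : ((N : ℕ) : ℂ) ^ s = (((N : ℝ) / 2 : ℝ) : ℂ) ^ s := by
        have : ((N : ℕ) : ℂ) = ((((2 : ℝ) * ((N : ℝ) / 2) : ℝ)) : ℂ) := by push_cast; ring
        rw [this, show ((((2:ℝ) * ((N:ℝ)/2) : ℝ)) : ℂ) = (((2:ℝ)):ℂ) * ((((N:ℝ)/2 : ℝ)):ℂ) by
          push_cast; ring,
          Complex.mul_cpow_ofReal_nonneg (by norm_num) (by positivity),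
          show (((2:ℝ)):ℂ) = (2:ℂ) by norm_num, h2, one_mul]
      have hmvt := hv_mvt (c := s) (by simp [hre]) (lt_of_lt_of_le one_pos hm1') hmN
      have hsub : ((N:ℝ)/2 - (m:ℝ)) ≤ 1 := by linarith
      have hnorm_s : 0 < ‖s‖ := norm_pos_iff.2 hs0
      have hrw : ‖((m : ℕ) : ℂ) ^ s / s - ((N : ℕ) : ℂ) ^ s / s‖ =
          ‖(((N:ℝ)/2 : ℝ) : ℂ) ^ s - (((m:ℝ)) : ℂ) ^ s‖ / ‖s‖ := by
        rw [← norm_neg, ← norm_div]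
        congr 1
        rw [hNs]
        push_cast
        ring
      rw [hrw, div_le_iff₀ hnorm_s]
      have hre1 : s.re - 1 = -1 := by rw [hre]; ring
      rw [hre1] at hmvt
      have hpow : (m:ℝ) ^ (-1:ℝ) = ((m:ℝ))⁻¹ := by
        rw [Real.rpow_neg (by linarith), Real.rpow_one]
      rw [hpow] at hmvt
      calc ‖(((N:ℝ)/2 : ℝ) : ℂ) ^ s - (((m:ℝ)) : ℂ) ^ s‖
          ≤ ‖s‖ * ((m:ℝ))⁻¹ * ((N:ℝ)/2 - (m:ℝ)) := hmvt
        _ ≤ ‖s‖ * ((m:ℝ))⁻¹ * 1 := by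
            gcongr
        _ = ((m:ℝ))⁻¹ * ‖s‖ := by ring
    · exact (tendsto_natCast_atTop_atTop.comp hdiv).inv_tendsto_atTop
  have heq : ∀ N : ℕ, ∑ n ∈ Finset.range N,
      (-1 : ℂ) ^ (n + 1) * ((n + 1 : ℕ) : ℂ) ^ (s - 1) =
      (((N / 2 : ℕ) : ℂ) ^ s / s - ((N : ℕ) : ℂ) ^ s / s) +
      ((∑ k ∈ Finset.range (N / 2), hvc s k) - ∑ k ∈ Finset.range N, hvc s k) := by
    intro N
    rw [hv_alt_eq hre h2, hv_T_eq hs0, hv_T_eq hs0]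
    ring
  rw [show (0 : ℂ) = 0 + 0 by ring]
  exact Tendsto.congr (fun N => (heq N).symm) (part2.add part1)

end

lemma hv_cpow_eval {b x : ℝ} (hx : 0 < x) :
    (x : ℂ) ^ ((b : ℂ) * I - 1) =
      ((x⁻¹ : ℝ) : ℂ) * Complex.exp (((b * Real.log x : ℝ) : ℂ) * I) := by
  have hxne : (x : ℂ) ≠ 0 := Complex.ofReal_ne_zero.2 hx.ne'
  rw [Complex.cpow_def_of_ne_zero hxne, ← Complex.ofReal_log hx.le]
  have h1 : ((Real.log x : ℝ) : ℂ) * ((b : ℂ) * I - 1) =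
      ((b * Real.log x : ℝ) : ℂ) * I - ((Real.log x : ℝ) : ℂ) := by push_cast; ring
  rw [h1, Complex.exp_sub]
  have h2 : Complex.exp ((Real.log x : ℝ) : ℂ) = (x : ℂ) := by
    rw [← Complex.ofReal_exp, Real.exp_log hx]
  rw [h2]
  push_cast
  ring

theorem havil_conjecture_false :
    ∃ a b : ℝ, a ≠ 1 / 2 ∧
      Tendsto (fun N : ℕ => ∑ n ∈ Finset.range N,
          ((-1 : ℝ) ^ (n + 1) / ((n : ℝ) + 1) ^ a) * Real.cos (b * Real.log ((n : ℝ) + 1)))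
        atTop (𝓝 0) ∧
      Tendsto (fun N : ℕ => ∑ n ∈ Finset.range N,
          ((-1 : ℝ) ^ (n + 1) / ((n : ℝ) + 1) ^ a) * Real.sin (b * Real.log ((n : ℝ) + 1)))
        atTop (𝓝 0) := by
  set b : ℝ := 2 * Real.pi / Real.log 2 with hbdef
  set s : ℂ := (b : ℂ) * I with hsdef
  have hlog2 : (0:ℝ) < Real.log 2 := Real.log_pos one_lt_two
  have hbpos : 0 < b := by positivity
  have hre : s.re = 0 := by simp [hsdef]
  have hs0 : s ≠ 0 := by
    intro h
    have := congrArg Complex.im h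
    simp [hsdef] at this
    exact absurd this hbpos.ne'
  have h2 : (2 : ℂ) ^ s = 1 := by
    rw [Complex.cpow_def_of_ne_zero two_ne_zero]
    have hl : Complex.log 2 = ((Real.log 2 : ℝ) : ℂ) := by
      rw [Complex.ofReal_log (by norm_num : (0:ℝ) ≤ 2)]
      norm_num
    have hmul : ((Real.log 2 : ℝ) : ℂ) * s = 2 * (Real.pi : ℂ) * I := by
      rw [hsdef]
      have : (Real.log 2) * b = 2 * Real.pi := by
        rw [hbdef]; field_simp
      calc ((Real.log 2 : ℝ) : ℂ) * ((b : ℂ) * I) = (((Real.log 2 * b : ℝ)) : ℂ) * I := by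
            push_cast; ring
        _ = 2 * (Real.pi : ℂ) * I := by rw [this]; push_cast; ring
    rw [hl, hmul, Complex.exp_two_pi_mul_I]
  have hmain := hv_eta_zero hre hs0 h2
  have hterm : ∀ n : ℕ, (-1 : ℂ) ^ (n + 1) * ((n + 1 : ℕ) : ℂ) ^ (s - 1) =
      (((((-1:ℝ)) ^ (n+1) * ((n:ℝ)+1)⁻¹ : ℝ)) : ℂ) *
        Complex.exp (((b * Real.log ((n:ℝ)+1) : ℝ) : ℂ) * I) := by
    intro n
    have hx : (0:ℝ) < (n:ℝ) + 1 := by positivity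
    have hcast : ((n + 1 : ℕ) : ℂ) = (((n:ℝ) + 1 : ℝ) : ℂ) := by push_cast; ring
    rw [hcast, hsdef, hv_cpow_eval hx]
    push_cast
    ring
  have hre_term : ∀ n : ℕ, ((-1 : ℂ) ^ (n + 1) * ((n + 1 : ℕ) : ℂ) ^ (s - 1)).re =
      ((-1 : ℝ) ^ (n + 1) / ((n : ℝ) + 1) ^ (1:ℝ)) * Real.cos (b * Real.log ((n : ℝ) + 1)) := by
    intro n
    rw [hterm n, Complex.re_ofReal_mul, Complex.exp_ofReal_mul_I_re,
      Real.rpow_one]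
    ring
  have him_term : ∀ n : ℕ, ((-1 : ℂ) ^ (n + 1) * ((n + 1 : ℕ) : ℂ) ^ (s - 1)).im =
      ((-1 : ℝ) ^ (n + 1) / ((n : ℝ) + 1) ^ (1:ℝ)) * Real.sin (b * Real.log ((n : ℝ) + 1)) := by
    intro n
    rw [hterm n, Complex.im_ofReal_mul, Complex.exp_ofReal_mul_I_im,
      Real.rpow_one]
    ring
  refine ⟨1, b, by norm_num, ?_, ?_⟩
  · have h := (Complex.continuous_re.tendsto 0).comp hmain
    simp only [Complex.zero_re] at h
    apply h.congr
    intro N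
    simp only [Function.comp_apply, Complex.re_sum]
    exact Finset.sum_congr rfl fun n _ => hre_term n
  · have h := (Complex.continuous_im.tendsto 0).comp hmain
    simp only [Complex.zero_im] at h
    apply h.congr
    intro N
    simp only [Function.comp_apply, Complex.im_sum]
    exact Finset.sum_congr rfl fun n _ => him_term n
end

section
/- The Riemann Hypothesis holds if and only if the following statement holds: for all real numbers a and b, if ∑_{n=1}^∞ ((-1)^n/n^a)·cos(b·ln n) = 0 and ∑_{n=1}^∞ ((-1)^n/n^a)·sin(b·ln n) = 0, then a = 1/2 or a = 1. -/
open Filter Topology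

section RHAux

open Complex


noncomputable def etaPair (k : ℕ) (s : ℂ) : ℂ :=
  ((2 * k + 2 : ℕ) : ℂ) ^ (-s) - ((2 * k + 1 : ℕ) : ℂ) ^ (-s)

noncomputable def etaF (s : ℂ) : ℂ := ∑' k : ℕ, etaPair k s

lemma hasDerivAt_real_cpow_neg {s : ℂ} (hs : s ≠ 0) {x : ℝ} (hx : x ≠ 0) :
    HasDerivAt (fun y : ℝ => (y : ℂ) ^ (-s)) (-s * (x : ℂ) ^ (-s - 1)) x := by
  have hr : -s - 1 ≠ -1 := fun h => hs (by linear_combination -h)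
  have h := (hasDerivAt_ofReal_cpow_const' hx hr).const_mul (-s)
  have he : (fun y : ℝ => -s * ((y : ℂ) ^ (-s - 1 + 1) / (-s - 1 + 1))) =
      fun y : ℝ => (y : ℂ) ^ (-s) := by
    funext y
    rw [show -s - 1 + 1 = -s by ring]
    field_simp
  rwa [he] at h

lemma etaPair_norm_le (k : ℕ) {s : ℂ} (hs : 0 < s.re) :
    ‖etaPair k s‖ ≤ ‖s‖ * (2 * (k : ℝ) + 1) ^ (-s.re - 1) := by
  have hs0 : s ≠ 0 := fun h => by simp [h] at hs
  have hkpos : (0 : ℝ) < 2 * (k : ℝ) + 1 := by positivity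
  set I : Set ℝ := Set.Icc (2 * (k : ℝ) + 1) (2 * (k : ℝ) + 2) with hI
  have hderiv : ∀ x ∈ I, HasDerivWithinAt (fun y : ℝ => (y : ℂ) ^ (-s))
      (-s * (x : ℂ) ^ (-s - 1)) I x := by
    intro x hx
    exact (hasDerivAt_real_cpow_neg hs0 (by nlinarith [hx.1] : x ≠ 0)).hasDerivWithinAt
  have hbound : ∀ x ∈ I, ‖-s * (x : ℂ) ^ (-s - 1)‖ ≤ ‖s‖ * (2 * (k : ℝ) + 1) ^ (-s.re - 1) := by
    intro x hx
    have hxpos : (0 : ℝ) < x := lt_of_lt_of_le hkpos hx.1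
    rw [norm_mul, norm_neg, Complex.norm_cpow_eq_rpow_re_of_pos hxpos,
      show (-s - 1).re = -s.re - 1 by simp]
    gcongr ‖s‖ * ?_
    exact Real.rpow_le_rpow_of_nonpos hkpos hx.1 (by linarith)
  have key := Convex.norm_image_sub_le_of_norm_hasDerivWithin_le hderiv hbound (convex_Icc _ _)
    (x := 2 * (k : ℝ) + 1) (y := 2 * (k : ℝ) + 2)
    ⟨le_refl _, by linarith⟩ ⟨by linarith, le_refl _⟩
  have h1 : ((2 * k + 2 : ℕ) : ℂ) = (((2 * (k : ℝ) + 2 : ℝ)) : ℂ) := by push_cast; ring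
  have h2 : ((2 * k + 1 : ℕ) : ℂ) = (((2 * (k : ℝ) + 1 : ℝ)) : ℂ) := by push_cast; ring
  rw [etaPair, h1, h2]
  calc ‖(((2 * (k : ℝ) + 2 : ℝ)) : ℂ) ^ (-s) - (((2 * (k : ℝ) + 1 : ℝ)) : ℂ) ^ (-s)‖
      ≤ ‖s‖ * (2 * (k : ℝ) + 1) ^ (-s.re - 1) * ‖(2 * (k : ℝ) + 2) - (2 * (k : ℝ) + 1)‖ := key
    _ = ‖s‖ * (2 * (k : ℝ) + 1) ^ (-s.re - 1) := by norm_num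
lemma summable_etaBound {σ : ℝ} (hσ : 0 < σ) (C : ℝ) :
    Summable (fun k : ℕ => C * (2 * (k : ℝ) + 1) ^ (-σ - 1)) := by
  apply Summable.mul_left
  have h1 : Summable (fun k : ℕ => ((k : ℝ) + 1) ^ (-σ - 1)) := by
    have h := (Real.summable_nat_rpow (p := -σ - 1)).mpr (by linarith)
    have := h.comp_injective (Nat.succ_injective)
    refine this.congr fun k => ?_
    simp [Function.comp, Nat.succ_eq_add_one]
  refine Summable.of_nonneg_of_le (fun k => Real.rpow_nonneg (by positivity) _)
    (fun k => ?_) h1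
  exact Real.rpow_le_rpow_of_nonpos (by positivity) (by linarith [Nat.cast_nonneg (α := ℝ) k])
    (by linarith)

lemma etaPair_summable {s : ℂ} (hs : 0 < s.re) : Summable (fun k => etaPair k s) := by
  refine Summable.of_norm (Summable.of_nonneg_of_le (fun k => norm_nonneg _)
    (fun k => etaPair_norm_le k hs) (summable_etaBound hs ‖s‖))

lemma etaF_hasSum {s : ℂ} (hs : 0 < s.re) : HasSum (fun k => etaPair k s) (etaF s) :=
  (etaPair_summable hs).hasSum

lemma sum_range_even (s : ℂ) (M : ℕ) :
    ∑ n ∈ Finset.range (2 * M), (-1 : ℂ) ^ (n + 1) * ((n : ℂ) + 1) ^ (-s)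
      = ∑ k ∈ Finset.range M, etaPair k s := by
  induction M with
  | zero => simp
  | succ M ih =>
    rw [show 2 * (M + 1) = (2 * M) + 1 + 1 by ring, Finset.sum_range_succ, Finset.sum_range_succ,
      ih, Finset.sum_range_succ, etaPair]
    have ho : (-1 : ℂ) ^ (2 * M + 1) = -1 := Odd.neg_one_pow ⟨M, by ring⟩
    have he : (-1 : ℂ) ^ (2 * M + 1 + 1) = 1 := Even.neg_one_pow ⟨M + 1, by ring⟩
    have e1 : (((2 * M : ℕ) : ℂ) + 1) = ((2 * M + 1 : ℕ) : ℂ) := by push_cast; ring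
    have e2 : (((2 * M + 1 : ℕ) : ℂ) + 1) = ((2 * M + 2 : ℕ) : ℂ) := by push_cast; ring
    rw [ho, he, e1, e2]
    ring

lemma tendsto_even_sums {s : ℂ} (hs : 0 < s.re) :
    Tendsto (fun M => ∑ n ∈ Finset.range (2 * M), (-1 : ℂ) ^ (n + 1) * ((n : ℂ) + 1) ^ (-s))
      atTop (𝓝 (etaF s)) :=
  ((etaF_hasSum hs).tendsto_sum_nat).congr fun M => (sum_range_even s M).symm

lemma tendsto_etaSeries {s : ℂ} (hs : 0 < s.re) :
    Tendsto (fun N => ∑ n ∈ Finset.range N, (-1 : ℂ) ^ (n + 1) * ((n : ℂ) + 1) ^ (-s))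
      atTop (𝓝 (etaF s)) := by
  set T : ℕ → ℂ := fun N => ∑ n ∈ Finset.range N, (-1 : ℂ) ^ (n + 1) * ((n : ℂ) + 1) ^ (-s)
    with hT
  have hhalf : Tendsto (fun N : ℕ => N / 2) atTop atTop :=
    tendsto_atTop_atTop.mpr fun b => ⟨2 * b + 1, fun a ha => by omega⟩
  have h1 : Tendsto (fun N => T (2 * (N / 2))) atTop (𝓝 (etaF s)) :=
    (tendsto_even_sums hs).comp hhalf
  have h2 : ∀ N : ℕ, ‖T N - T (2 * (N / 2))‖ ≤ ((N : ℝ)) ^ (-s.re) := by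
    intro N
    rcases Nat.even_or_odd N with ⟨m, hm⟩ | ⟨m, hm⟩
    · have : 2 * (N / 2) = N := by omega
      rw [this, sub_self, norm_zero]
      exact Real.rpow_nonneg (Nat.cast_nonneg N) _
    · have h2m : 2 * (N / 2) = 2 * m := by omega
      have hNsucc : N = 2 * m + 1 := hm
      rw [h2m, hNsucc]
      have : T (2 * m + 1) = T (2 * m) + (-1 : ℂ) ^ (2 * m + 1) * (((2 * m : ℕ) : ℂ) + 1) ^ (-s) :=
        Finset.sum_range_succ _ _
      rw [this, add_sub_cancel_left, norm_mul]
      have hx : (((2 * m : ℕ) : ℂ) + 1) = (((2 * m + 1 : ℕ) : ℝ) : ℂ) := by push_cast; ring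
      rw [hx, norm_pow, norm_neg, norm_one, one_pow, one_mul,
        Complex.norm_cpow_eq_rpow_re_of_pos (by positivity),
        Complex.neg_re]
  have h3 : Tendsto (fun N => T N - T (2 * (N / 2))) atTop (𝓝 0) := by
    refine squeeze_zero_norm h2 ?_
    exact (tendsto_rpow_neg_atTop hs).comp tendsto_natCast_atTop_atTop
  have := h3.add h1
  simp only [zero_add, sub_add_cancel] at this
  exact this
lemma tendsto_zetaSeries {s : ℂ} (hs : 1 < s.re) :
    Tendsto (fun N => ∑ n ∈ Finset.range N, ((n : ℂ) + 1) ^ (-s)) atTop (𝓝 (riemannZeta s)) := by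
  have hZ : HasSum (fun n => LSeries.term 1 s n) (riemannZeta s) := LSeriesHasSum_one hs
  have h := hZ.tendsto_sum_nat.comp (tendsto_add_atTop_nat 1)
  refine h.congr fun N => ?_
  rw [Function.comp_apply, Finset.sum_range_succ']
  simp only [LSeries.term_zero, add_zero]
  refine Finset.sum_congr rfl fun n _ => ?_
  rw [LSeries.term_of_ne_zero (Nat.succ_ne_zero n), Pi.one_apply, cpow_neg]
  push_cast
  rw [one_div]

lemma sum_even_identity {s : ℂ} (M : ℕ) :
    ∑ k ∈ Finset.range M, etaPair k s
      = 2 ^ ((1 : ℂ) - s) * (∑ n ∈ Finset.range M, ((n : ℂ) + 1) ^ (-s))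
        - ∑ n ∈ Finset.range (2 * M), ((n : ℂ) + 1) ^ (-s) := by
  have h2 : (2 : ℂ) ^ ((1 : ℂ) - s) = 2 * 2 ^ (-s) := by
    rw [sub_eq_add_neg, cpow_add _ _ (two_ne_zero), cpow_one]
  induction M with
  | zero => simp
  | succ M ih =>
    rw [Finset.sum_range_succ, ih, Finset.sum_range_succ,
      show 2 * (M + 1) = (2 * M) + 1 + 1 by ring, Finset.sum_range_succ, Finset.sum_range_succ,
      etaPair, h2]
    have key : ((2 * M + 2 : ℕ) : ℂ) ^ (-s) = (2 : ℂ) ^ (-s) * (((M : ℂ) + 1)) ^ (-s) := by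
      have hmc := mul_cpow_ofReal_nonneg (a := 2) (b := (M : ℝ) + 1)
        (by norm_num) (by positivity) (-s)
      have hcast : ((2 * M + 2 : ℕ) : ℂ) = (((2 : ℝ)) : ℂ) * (((M : ℝ) + 1 : ℝ) : ℂ) := by
        push_cast; ring
      rw [hcast, hmc]
      push_cast
      ring
    have e1 : (((2 * M : ℕ) : ℂ) + 1) = ((2 * M + 1 : ℕ) : ℂ) := by push_cast; ring
    have e2 : (((2 * M + 1 : ℕ) : ℂ) + 1) = ((2 * M + 2 : ℕ) : ℂ) := by push_cast; ring
    rw [e1, e2, key]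
    ring

lemma etaF_eq_formula_of_one_lt {s : ℂ} (hs : 1 < s.re) :
    etaF s = (2 ^ ((1 : ℂ) - s) - 1) * riemannZeta s := by
  have h0 : 0 < s.re := by linarith
  have hdouble : Tendsto (fun M : ℕ => 2 * M) atTop atTop :=
    tendsto_atTop_atTop.mpr fun b => ⟨b, fun a ha => by omega⟩
  have hrhs : Tendsto (fun M => 2 ^ ((1 : ℂ) - s) * (∑ n ∈ Finset.range M, ((n : ℂ) + 1) ^ (-s))
      - ∑ n ∈ Finset.range (2 * M), ((n : ℂ) + 1) ^ (-s)) atTop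
      (𝓝 (2 ^ ((1 : ℂ) - s) * riemannZeta s - riemannZeta s)) :=
    (((tendsto_zetaSeries hs).const_mul _).sub ((tendsto_zetaSeries hs).comp hdouble))
  have hlhs : Tendsto (fun M => ∑ k ∈ Finset.range M, etaPair k s) atTop (𝓝 (etaF s)) :=
    (etaF_hasSum h0).tendsto_sum_nat
  have := tendsto_nhds_unique (hlhs.congr fun M => sum_even_identity M) hrhs
  rw [this]; ring

noncomputable def etaPhi : ZMod 2 → ℂ := fun j => if j = 0 then 1 else -1

lemma etaPhi_sum : ∑ j, etaPhi j = 0 := by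
  have : (Finset.univ : Finset (ZMod 2)) = {0, 1} := by decide
  rw [this]
  simp [etaPhi]

lemma etaPhi_nat (n : ℕ) : etaPhi (n : ZMod 2) = (-1 : ℂ) ^ n := by
  rcases Nat.even_or_odd n with h | h
  · have h0 : ((n : ZMod 2)) = 0 := (ZMod.natCast_eq_zero_iff n 2).mpr h.two_dvd
    simp [etaPhi, h0, h.neg_one_pow]
  · have h0 : ((n : ZMod 2)) ≠ 0 := by
      rw [Ne, ZMod.natCast_eq_zero_iff]
      exact fun hd => (Nat.not_even_iff_odd.mpr h) (even_iff_two_dvd.mpr hd)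
    simp [etaPhi, h0, h.neg_one_pow]

lemma etaF_eq_LFunction {s : ℂ} (hs : 1 < s.re) : etaF s = ZMod.LFunction etaPhi s := by
  have h0 : 0 < s.re := by linarith
  rw [ZMod.LFunction_eq_LSeries etaPhi hs]
  have hsum : HasSum (fun n => LSeries.term (etaPhi ·) s n) (LSeries (etaPhi ·) s) :=
    (ZMod.LSeriesSummable_of_one_lt_re etaPhi hs).hasSum
  have h := hsum.tendsto_sum_nat.comp (tendsto_add_atTop_nat 1)
  have h' : Tendsto (fun N => ∑ n ∈ Finset.range N, (-1 : ℂ) ^ (n + 1) * ((n : ℂ) + 1) ^ (-s))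
      atTop (𝓝 (LSeries (etaPhi ·) s)) := by
    refine h.congr fun N => ?_
    rw [Function.comp_apply, Finset.sum_range_succ']
    simp only [LSeries.term_zero, add_zero]
    refine Finset.sum_congr rfl fun n _ => ?_
    rw [LSeries.term_of_ne_zero (Nat.succ_ne_zero n), etaPhi_nat, cpow_neg]
    push_cast
    rw [div_eq_mul_inv]
  exact tendsto_nhds_unique (tendsto_etaSeries h0) h'
lemma etaF_differentiableOn : DifferentiableOn ℂ etaF {z : ℂ | 0 < z.re} := by
  have hopen : IsOpen {z : ℂ | 0 < z.re} := isOpen_lt continuous_const Complex.continuous_re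
  have hdiff : ∀ K : ℕ, DifferentiableOn ℂ
      (fun z => ∑ k ∈ Finset.range K, etaPair k z) {z : ℂ | 0 < z.re} := by
    intro K
    apply DifferentiableOn.fun_sum
    intro k _
    apply DifferentiableOn.sub <;>
    · apply DifferentiableOn.const_cpow (differentiable_neg.differentiableOn)
      exact Or.inl (Nat.cast_ne_zero.mpr (by omega))
  have hTLU : TendstoLocallyUniformlyOn (fun (K : ℕ) (z : ℂ) => ∑ k ∈ Finset.range K, etaPair k z)
      etaF atTop {z : ℂ | 0 < z.re} := ?_
  · exact hTLU.differentiableOn (Eventually.of_forall hdiff) hopen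
  rw [tendstoLocallyUniformlyOn_iff_forall_isCompact hopen]
  intro K hK hKc
  rcases K.eq_empty_or_nonempty with rfl | hne
  · simp [TendstoUniformlyOn]
  obtain ⟨z₀, hz₀K, hz₀⟩ := hKc.exists_isMinOn hne (Complex.continuous_re.continuousOn)
  obtain ⟨z₁, hz₁K, hz₁⟩ := hKc.exists_isMaxOn hne (continuous_norm.continuousOn)
  have hσ : 0 < z₀.re := hK hz₀K
  apply tendstoUniformlyOn_tsum_nat (summable_etaBound hσ ‖z₁‖)
  intro k z hz
  refine (etaPair_norm_le k (hK hz)).trans ?_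
  have h1 : ‖z‖ ≤ ‖z₁‖ := hz₁ hz
  have h2 : (2 * (k : ℝ) + 1) ^ (-z.re - 1) ≤ (2 * (k : ℝ) + 1) ^ (-z₀.re - 1) := by
    apply Real.rpow_le_rpow_of_exponent_le (by simp [le_add_iff_nonneg_left])
    have := hz₀ hz
    simp only [IsMinOn, IsMinFilter] at this
    have : z₀.re ≤ z.re := hz₀ hz
    linarith
  calc ‖z‖ * (2 * (k : ℝ) + 1) ^ (-z.re - 1)
      ≤ ‖z₁‖ * (2 * (k : ℝ) + 1) ^ (-z₀.re - 1) := by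
        apply mul_le_mul h1 h2 (Real.rpow_nonneg (by positivity) _) (norm_nonneg _)
    _ = _ := rfl

lemma etaF_eq_LFunction' {s : ℂ} (hs : 0 < s.re) : etaF s = ZMod.LFunction etaPhi s := by
  have hopen : IsOpen {z : ℂ | 0 < z.re} := isOpen_lt continuous_const Complex.continuous_re
  have hE : Differentiable ℂ (ZMod.LFunction etaPhi) :=
    ZMod.differentiable_LFunction_of_sum_zero etaPhi_sum
  have hana1 : AnalyticOnNhd ℂ etaF {z : ℂ | 0 < z.re} :=
    etaF_differentiableOn.analyticOnNhd hopen
  have hana2 : AnalyticOnNhd ℂ (ZMod.LFunction etaPhi) {z : ℂ | 0 < z.re} :=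
    hE.differentiableOn.analyticOnNhd hopen
  have hconn : IsPreconnected {z : ℂ | 0 < z.re} := (convex_halfSpace_re_gt 0).isPreconnected
  have h2 : (2 : ℂ) ∈ {z : ℂ | 0 < z.re} := by norm_num [Set.mem_setOf_eq]
  have hev : etaF =ᶠ[𝓝 (2 : ℂ)] ZMod.LFunction etaPhi := by
    have hopen' : IsOpen {z : ℂ | 1 < z.re} := isOpen_lt continuous_const Complex.continuous_re
    refine Filter.eventuallyEq_of_mem (hopen'.mem_nhds (by norm_num [Set.mem_setOf_eq])) ?_
    intro z hz
    exact etaF_eq_LFunction hz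
  exact hana1.eqOn_of_preconnected_of_eventuallyEq hana2 hconn h2 hev hs

lemma LFunction_eq_formula {s : ℂ} (hs : s ≠ 1) :
    ZMod.LFunction etaPhi s = (2 ^ ((1 : ℂ) - s) - 1) * riemannZeta s := by
  have hE : Differentiable ℂ (ZMod.LFunction etaPhi) :=
    ZMod.differentiable_LFunction_of_sum_zero etaPhi_sum
  have hopen : IsOpen ({(1 : ℂ)}ᶜ : Set ℂ) := isOpen_compl_singleton
  have hana1 : AnalyticOnNhd ℂ (ZMod.LFunction etaPhi) ({(1 : ℂ)}ᶜ : Set ℂ) :=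
    hE.differentiableOn.analyticOnNhd hopen
  have hana2 : AnalyticOnNhd ℂ (fun z => (2 ^ ((1 : ℂ) - z) - 1) * riemannZeta z)
      ({(1 : ℂ)}ᶜ : Set ℂ) := by
    refine DifferentiableOn.analyticOnNhd ?_ hopen
    intro z hz
    refine DifferentiableAt.differentiableWithinAt ?_
    exact (((differentiableAt_const _).sub differentiableAt_id).const_cpow
      (Or.inl two_ne_zero)).sub_const 1 |>.mul (differentiableAt_riemannZeta hz)
  have hconn : IsPreconnected ({(1 : ℂ)}ᶜ : Set ℂ) :=
    (isConnected_compl_singleton_of_one_lt_rank (rank_real_complex ▸ Nat.one_lt_ofNat) 1).isPreconnected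
  have h2 : (2 : ℂ) ∈ ({(1 : ℂ)}ᶜ : Set ℂ) := by norm_num
  have hev : ZMod.LFunction etaPhi =ᶠ[𝓝 (2 : ℂ)]
      fun z => (2 ^ ((1 : ℂ) - z) - 1) * riemannZeta z := by
    have hopen' : IsOpen {z : ℂ | 1 < z.re} := isOpen_lt continuous_const Complex.continuous_re
    refine Filter.eventuallyEq_of_mem (hopen'.mem_nhds (by norm_num [Set.mem_setOf_eq])) ?_
    intro z hz
    rw [← etaF_eq_LFunction hz]
    exact etaF_eq_formula_of_one_lt hz
  exact hana1.eqOn_of_preconnected_of_eventuallyEq hana2 hconn h2 hev hs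

lemma etaF_eq_formula {s : ℂ} (hs : 0 < s.re) (hs1 : s ≠ 1) :
    etaF s = (2 ^ ((1 : ℂ) - s) - 1) * riemannZeta s :=
  (etaF_eq_LFunction' hs).trans (LFunction_eq_formula hs1)
lemma cpow_real_decomp {x : ℝ} (hx : 0 < x) (a b : ℝ) :
    ((x : ℝ) : ℂ) ^ (-((a : ℂ) + (b : ℂ) * Complex.I)) =
      ((x ^ (-a) * Real.cos (b * Real.log x) : ℝ) : ℂ)
      - ((x ^ (-a) * Real.sin (b * Real.log x) : ℝ) : ℂ) * Complex.I := by
  have h1 : ((x : ℝ) : ℂ) ^ (-((a : ℂ) + (b : ℂ) * Complex.I))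
      = ((x : ℝ) : ℂ) ^ (-(a : ℂ)) * ((x : ℝ) : ℂ) ^ (-(b : ℂ) * Complex.I) := by
    rw [← cpow_add _ _ (ofReal_ne_zero.mpr hx.ne')]
    ring_nf
  have h2 : ((x : ℝ) : ℂ) ^ (-(a : ℂ)) = ((x ^ (-a) : ℝ) : ℂ) := by
    rw [Complex.ofReal_cpow hx.le, Complex.ofReal_neg]
  have h3 : ((x : ℝ) : ℂ) ^ (-(b : ℂ) * Complex.I)
      = ((Real.cos (b * Real.log x) : ℝ) : ℂ)
        - ((Real.sin (b * Real.log x) : ℝ) : ℂ) * Complex.I := by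
    rw [cpow_def_of_ne_zero (ofReal_ne_zero.mpr hx.ne'), ← Complex.ofReal_log hx.le]
    have he : ((Real.log x : ℝ) : ℂ) * (-(b : ℂ) * Complex.I)
        = ((-(b * Real.log x) : ℝ) : ℂ) * Complex.I := by push_cast; ring
    rw [he, Complex.exp_mul_I, ← Complex.ofReal_cos, ← Complex.ofReal_sin,
      Real.cos_neg, Real.sin_neg]
    push_cast
    ring
  rw [h1, h2, h3]
  push_cast
  ring

lemma eta_term_eq (a b : ℝ) (n : ℕ) :
    (-1 : ℂ) ^ (n + 1) * ((n : ℂ) + 1) ^ (-((a : ℂ) + (b : ℂ) * Complex.I)) =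
      ((((-1 : ℝ) ^ (n + 1) / ((n : ℝ) + 1) ^ a) * Real.cos (b * Real.log ((n : ℝ) + 1)) : ℝ) : ℂ)
      - ((((-1 : ℝ) ^ (n + 1) / ((n : ℝ) + 1) ^ a) * Real.sin (b * Real.log ((n : ℝ) + 1)) : ℝ) : ℂ)
        * Complex.I := by
  have hx : (0 : ℝ) < (n : ℝ) + 1 := by positivity
  have hb : ((n : ℂ) + 1) = ((((n : ℝ) + 1 : ℝ)) : ℂ) := by push_cast; ring
  rw [hb, cpow_real_decomp hx a b]
  have hpow : ((n : ℝ) + 1) ^ (-a) = 1 / ((n : ℝ) + 1) ^ a := by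
    rw [Real.rpow_neg hx.le, one_div]
  rw [hpow]
  push_cast
  ring

lemma eta_sum_eq (a b : ℝ) (N : ℕ) :
    ∑ n ∈ Finset.range N, (-1 : ℂ) ^ (n + 1) * ((n : ℂ) + 1) ^ (-((a : ℂ) + (b : ℂ) * Complex.I))
      = ((∑ n ∈ Finset.range N,
            ((-1 : ℝ) ^ (n + 1) / ((n : ℝ) + 1) ^ a) * Real.cos (b * Real.log ((n : ℝ) + 1)) : ℝ) : ℂ)
        - ((∑ n ∈ Finset.range N,
            ((-1 : ℝ) ^ (n + 1) / ((n : ℝ) + 1) ^ a) * Real.sin (b * Real.log ((n : ℝ) + 1)) : ℝ) : ℂ)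
          * Complex.I := by
  rw [Finset.sum_congr rfl fun n _ => eta_term_eq a b n, Finset.sum_sub_distrib,
    ← Finset.sum_mul]
  push_cast
  ring

end RHAux

theorem rh_iff_new_conjecture :
    (∀ s : ℂ, riemannZeta s = 0 → (∀ n : ℕ, s ≠ -2 * ((n : ℂ) + 1)) → s.re = 1 / 2)
      ↔ (∀ a b : ℝ,
          Tendsto (fun N : ℕ => ∑ n ∈ Finset.range N,
              ((-1 : ℝ) ^ (n + 1) / ((n : ℝ) + 1) ^ a) * Real.cos (b * Real.log ((n : ℝ) + 1)))
            atTop (𝓝 0) →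
          Tendsto (fun N : ℕ => ∑ n ∈ Finset.range N,
              ((-1 : ℝ) ^ (n + 1) / ((n : ℝ) + 1) ^ a) * Real.sin (b * Real.log ((n : ℝ) + 1)))
            atTop (𝓝 0) →
          a = 1 / 2 ∨ a = 1) := by
  constructor
  · -- RH implies conjecture
    intro hRH a b hC hS
    have ha : 0 < a := by
      by_contra hle
      push_neg at hle
      have hct : Tendsto (fun n : ℕ =>
          ((-1 : ℝ) ^ (n + 1) / ((n : ℝ) + 1) ^ a) * Real.cos (b * Real.log ((n : ℝ) + 1)))
          atTop (𝓝 0) := by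
        have h := (hC.comp (tendsto_add_atTop_nat 1)).sub hC
        simpa using h.congr fun N => by
          rw [Function.comp_apply, Finset.sum_range_succ, add_sub_cancel_left]
      have hdt : Tendsto (fun n : ℕ =>
          ((-1 : ℝ) ^ (n + 1) / ((n : ℝ) + 1) ^ a) * Real.sin (b * Real.log ((n : ℝ) + 1)))
          atTop (𝓝 0) := by
        have h := (hS.comp (tendsto_add_atTop_nat 1)).sub hS
        simpa using h.congr fun N => by
          rw [Function.comp_apply, Finset.sum_range_succ, add_sub_cancel_left]
      have htsq := (hct.mul hct).add (hdt.mul hdt)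
      rw [show (0 : ℝ) * 0 + 0 * 0 = 0 by ring] at htsq
      have hval : ∀ n : ℕ,
          (((-1 : ℝ) ^ (n + 1) / ((n : ℝ) + 1) ^ a) * Real.cos (b * Real.log ((n : ℝ) + 1))) *
            (((-1 : ℝ) ^ (n + 1) / ((n : ℝ) + 1) ^ a) * Real.cos (b * Real.log ((n : ℝ) + 1))) +
          (((-1 : ℝ) ^ (n + 1) / ((n : ℝ) + 1) ^ a) * Real.sin (b * Real.log ((n : ℝ) + 1))) *
            (((-1 : ℝ) ^ (n + 1) / ((n : ℝ) + 1) ^ a) * Real.sin (b * Real.log ((n : ℝ) + 1)))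
          = (1 / ((n : ℝ) + 1) ^ a) ^ 2 := by
        intro n
        have hk : ((-1 : ℝ) ^ (n + 1)) ^ 2 = 1 := by
          rw [← pow_mul, mul_comm, pow_mul, neg_one_sq, one_pow]
        have htrig := Real.cos_sq_add_sin_sq (b * Real.log ((n : ℝ) + 1))
        linear_combination (((-1 : ℝ) ^ (n + 1) / ((n : ℝ) + 1) ^ a) ^ 2) * htrig
          + (1 / (((n : ℝ) + 1) ^ a) ^ 2) * hk
      have hge : ∀ n : ℕ, (1 : ℝ) ≤ (1 / ((n : ℝ) + 1) ^ a) ^ 2 := by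
        intro n
        have hx1 : (1 : ℝ) ≤ (n : ℝ) + 1 := by
          have := Nat.cast_nonneg (α := ℝ) n; linarith
        have hle1 : ((n : ℝ) + 1) ^ a ≤ 1 :=
          Real.rpow_le_one_of_one_le_of_nonpos hx1 hle
        have hpos : (0 : ℝ) < ((n : ℝ) + 1) ^ a := Real.rpow_pos_of_pos (by positivity) a
        have h1 : (1 : ℝ) ≤ 1 / ((n : ℝ) + 1) ^ a := one_le_one_div hpos hle1
        nlinarith
      have h10 : (1 : ℝ) ≤ 0 :=
        ge_of_tendsto' htsq (fun n => le_of_le_of_eq (hge n) (hval n).symm)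
      linarith
    set s : ℂ := (a : ℂ) + (b : ℂ) * Complex.I with hsdef
    have hsre : s.re = a := by simp [hsdef]
    have hT0 : Tendsto (fun N => ∑ n ∈ Finset.range N,
        (-1 : ℂ) ^ (n + 1) * ((n : ℂ) + 1) ^ (-s)) atTop (𝓝 0) := by
      rw [hsdef]
      have h := ((Complex.continuous_ofReal.tendsto 0).comp hC).sub
        (((Complex.continuous_ofReal.tendsto 0).comp hS).mul_const Complex.I)
      have h0 : (((0 : ℝ)) : ℂ) - (((0 : ℝ)) : ℂ) * Complex.I = 0 := by simp
      rw [h0] at h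
      exact h.congr fun N => (eta_sum_eq a b N).symm
    have hFs : etaF s = 0 :=
      tendsto_nhds_unique (tendsto_etaSeries (by rw [hsre]; exact ha)) hT0
    by_cases hs1 : s = 1
    · right
      have := congrArg Complex.re hs1
      rw [hsre] at this
      simpa using this
    · have hform := etaF_eq_formula (by rw [hsre]; exact ha) hs1
      rw [hFs] at hform
      rcases mul_eq_zero.mp hform.symm with h2 | hz
      · right
        have h2' : (2 : ℂ) ^ ((1 : ℂ) - s) = 1 := by linear_combination h2
        have h2'' : (((2 : ℝ)) : ℂ) ^ ((1 : ℂ) - s) = 1 := by push_cast; exact h2'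
        have hnorm := congrArg norm h2''
        rw [Complex.norm_cpow_eq_rpow_re_of_pos two_pos, norm_one] at hnorm
        have hre : ((1 : ℂ) - s).re = 1 - a := by rw [Complex.sub_re, hsre]; simp
        rw [hre] at hnorm
        have hlog := congrArg Real.log hnorm
        rw [Real.log_rpow two_pos, Real.log_one] at hlog
        have hl2 : Real.log 2 ≠ 0 := ne_of_gt (Real.log_pos one_lt_two)
        have : 1 - a = 0 := by
          rcases mul_eq_zero.mp hlog with h | h
          · exact h
          · exact absurd h hl2
        linarith
      · left
        rw [← hsre]
        refine hRH s hz fun n hn => ?_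
        have := congrArg Complex.re hn
        rw [hsre] at this
        have hre2 : (-2 * ((n : ℂ) + 1)).re = -2 * ((n : ℝ) + 1) := by simp
        rw [hre2] at this
        have := Nat.cast_nonneg (α := ℝ) n
        linarith
  · -- conjecture implies RH
    intro hconj s hζ htriv
    rcases lt_or_ge s.re 1 with hlt | hge
    · rcases lt_or_ge 0 s.re with hpos | hle
      · -- critical strip
        have hs1 : s ≠ 1 := fun h => by rw [h] at hlt; simp at hlt
        have h0 : etaF s = 0 := by rw [etaF_eq_formula hpos hs1, hζ, mul_zero]
        have hT : Tendsto (fun N => ∑ n ∈ Finset.range N,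
            (-1 : ℂ) ^ (n + 1) * ((n : ℂ) + 1) ^ (-s)) atTop (𝓝 0) :=
          h0 ▸ tendsto_etaSeries hpos
        have hT2 : Tendsto (fun N => ∑ n ∈ Finset.range N,
            (-1 : ℂ) ^ (n + 1) * ((n : ℂ) + 1) ^ (-((s.re : ℂ) + (s.im : ℂ) * Complex.I)))
            atTop (𝓝 0) := by
          simpa only [Complex.re_add_im] using hT
        have hT3 : Tendsto (fun N =>
            ((∑ n ∈ Finset.range N, ((-1 : ℝ) ^ (n + 1) / ((n : ℝ) + 1) ^ s.re) *
              Real.cos (s.im * Real.log ((n : ℝ) + 1)) : ℝ) : ℂ)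
            - ((∑ n ∈ Finset.range N, ((-1 : ℝ) ^ (n + 1) / ((n : ℝ) + 1) ^ s.re) *
              Real.sin (s.im * Real.log ((n : ℝ) + 1)) : ℝ) : ℂ) * Complex.I)
            atTop (𝓝 0) :=
          hT2.congr fun N => eta_sum_eq s.re s.im N
        have hCt : Tendsto (fun N : ℕ => ∑ n ∈ Finset.range N,
            ((-1 : ℝ) ^ (n + 1) / ((n : ℝ) + 1) ^ s.re) *
              Real.cos (s.im * Real.log ((n : ℝ) + 1))) atTop (𝓝 0) := by
          have h := (Complex.continuous_re.tendsto 0).comp hT3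
          simp only [Complex.zero_re] at h
          refine h.congr fun N => ?_
          simp only [Function.comp_apply, Complex.sub_re, Complex.ofReal_re, Complex.mul_re,
            Complex.ofReal_im, Complex.I_re, Complex.I_im]
          ring
        have hSt : Tendsto (fun N : ℕ => ∑ n ∈ Finset.range N,
            ((-1 : ℝ) ^ (n + 1) / ((n : ℝ) + 1) ^ s.re) *
              Real.sin (s.im * Real.log ((n : ℝ) + 1))) atTop (𝓝 0) := by
          have h := ((Complex.continuous_im.tendsto 0).comp hT3).neg
          simp only [Complex.zero_im, neg_zero] at h
          refine h.congr fun N => ?_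
          simp only [Function.comp_apply, Complex.sub_im, Complex.ofReal_im, Complex.mul_im,
            Complex.ofReal_re, Complex.I_re, Complex.I_im]
          ring
        rcases hconj s.re s.im hCt hSt with h | h
        · exact h
        · exact absurd h (by linarith)
      · -- re s ≤ 0 : functional equation
        exfalso
        by_cases hs0 : s = 0
        · rw [hs0, riemannZeta_zero] at hζ; norm_num at hζ
        have hw : ∀ n : ℕ, (1 - s) ≠ -n := by
          intro n h
          have := congrArg Complex.re h
          simp only [Complex.sub_re, Complex.one_re, Complex.neg_re, Complex.natCast_re] at this
          have := Nat.cast_nonneg (α := ℝ) n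
          linarith
        have hw1 : (1 - s) ≠ 1 := fun h => hs0 (by linear_combination -h)
        have hfe := riemannZeta_one_sub hw hw1
        rw [show (1 : ℂ) - (1 - s) = s by ring, hζ] at hfe
        have hζw : riemannZeta (1 - s) ≠ 0 := by
          apply riemannZeta_ne_zero_of_one_le_re
          rw [Complex.sub_re, Complex.one_re]
          linarith
        have hΓ : Complex.Gamma (1 - s) ≠ 0 := Complex.Gamma_ne_zero hw
        have hpow : ((2 : ℂ) * (Real.pi : ℂ)) ^ (-(1 - s)) ≠ 0 := by
          intro h
          rw [Complex.cpow_eq_zero_iff] at h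
          exact mul_ne_zero two_ne_zero (Complex.ofReal_ne_zero.mpr Real.pi_ne_zero) h.1
        have hcos : Complex.cos ((Real.pi : ℂ) * (1 - s) / 2) = 0 := by
          by_contra hc
          exact (mul_ne_zero (mul_ne_zero (mul_ne_zero (mul_ne_zero two_ne_zero hpow) hΓ) hc)
            hζw) hfe.symm
        rcases Complex.cos_eq_zero_iff.mp hcos with ⟨k, hk⟩
        have hπ2 : ((Real.pi : ℂ) / 2) ≠ 0 := by
          apply div_ne_zero (Complex.ofReal_ne_zero.mpr Real.pi_ne_zero) two_ne_zero
        have h1s : (1 : ℂ) - s = 2 * (k : ℂ) + 1 := by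
          have : ((1 : ℂ) - s) * ((Real.pi : ℂ) / 2) = (2 * (k : ℂ) + 1) * ((Real.pi : ℂ) / 2) := by
            linear_combination hk
          exact mul_right_cancel₀ hπ2 this
        have hs_eq : s = -2 * (k : ℂ) := by linear_combination -h1s
        have hk_re : s.re = -2 * (k : ℝ) := by
          rw [hs_eq]
          simp
        have hk0 : 0 ≤ k := by
          by_contra hneg
          push_neg at hneg
          have h0 : k + 1 ≤ 0 := Int.lt_iff_add_one_le.mp hneg
          have h1 : (k : ℝ) ≤ -1 := by
            have : ((k + 1 : ℤ) : ℝ) ≤ 0 := by exact_mod_cast h0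
            push_cast at this
            linarith
          rw [hk_re] at hle
          linarith
        have hk1 : 1 ≤ k := by
          rcases lt_or_eq_of_le hk0 with h | h
          · omega
          · exfalso; apply hs0; rw [hs_eq, ← h]; simp
        apply htriv (k.toNat - 1)
        rw [hs_eq]
        have hnat : ((k.toNat - 1 : ℕ) : ℂ) + 1 = (k : ℂ) := by
          have h1 : (k.toNat - 1) + 1 = k.toNat := by omega
          have h2 : ((k.toNat : ℕ) : ℂ) = (k : ℂ) := by
            rw [← Int.toNat_of_nonneg hk0]; push_cast; rw [Int.toNat_of_nonneg hk0]
          rw [← h2, ← h1]; push_cast; ring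
        rw [hnat]
    · exact absurd hζ (riemannZeta_ne_zero_of_one_le_re hge)
end

section
/- Assume the Riemann Hypothesis. If real numbers a and b satisfy ∑_{n=1}^∞ ((-1)^n/n^a)·cos(b·ln n) = 0 and ∑_{n=1}^∞ ((-1)^n/n^a)·sin(b·ln n) = 0 (both series convergent), then a = 1/2 or a = 1. -/
open Filter Topology Complex

namespace RHaux

/-- The terms of the Dirichlet eta-type series. -/
noncomputable def A (s : ℂ) (n : ℕ) : ℂ := (-1) ^ (n + 1) * ((n : ℂ) + 1) ^ (-s)

lemma A_eq (a b : ℝ) (n : ℕ) :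
    A (↑a - ↑b * I) n =
      ↑(((-1 : ℝ) ^ (n + 1) / ((n : ℝ) + 1) ^ a) * Real.cos (b * Real.log ((n : ℝ) + 1)))
      + ↑(((-1 : ℝ) ^ (n + 1) / ((n : ℝ) + 1) ^ a) * Real.sin (b * Real.log ((n : ℝ) + 1))) * I := by
  have hr : (0:ℝ) < (n:ℝ) + 1 := by positivity
  set r : ℝ := (n:ℝ) + 1 with hrdef
  set L : ℝ := Real.log r with hLdef
  have hbase : ((n : ℂ) + 1) = (r : ℂ) := by rw [hrdef]; push_cast; ring
  have h0 : (r : ℂ) ≠ 0 := ofReal_ne_zero.mpr hr.ne'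
  have hlog : Complex.log (r : ℂ) = (L : ℂ) := (Complex.ofReal_log hr.le).symm
  have harg : Complex.log (r : ℂ) * (-(↑a - ↑b * I)) = ↑(-(a*L)) + ↑(b*L) * I := by
    rw [hlog]; push_cast; ring
  have hexp : ((r:ℂ)) ^ (-(↑a - ↑b * I : ℂ)) =
      ↑(Real.exp (-(a*L))) * (↑(Real.cos (b*L)) + ↑(Real.sin (b*L)) * I) := by
    rw [Complex.cpow_def_of_ne_zero h0, harg, Complex.exp_add, ← Complex.ofReal_exp,
      Complex.exp_mul_I, ← Complex.ofReal_cos, ← Complex.ofReal_sin]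
  have hrp : Real.exp (-(a*L)) = (r ^ a)⁻¹ := by
    rw [hLdef, ← Real.rpow_neg hr.le, Real.rpow_def_of_pos hr]
    ring_nf
  rw [A, hbase, hexp, hrp]
  push_cast
  ring

lemma norm_A (s : ℂ) (n : ℕ) : ‖A s n‖ = ((n:ℝ)+1) ^ (-s.re) := by
  have hr : (0:ℝ) < (n:ℝ)+1 := by positivity
  have hbase : ((n : ℂ) + 1) = ((((n:ℝ)+1) : ℝ) : ℂ) := by push_cast; ring
  rw [A, norm_mul, hbase, norm_pow, norm_neg, norm_one, one_pow, one_mul,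
      Complex.norm_cpow_eq_rpow_re_of_pos hr, neg_re]

lemma summable_rpow_aux {p : ℝ} (hp : 1 < p) : Summable (fun n : ℕ => ((n:ℝ)+1) ^ (-p)) := by
  have h : Summable (fun n : ℕ => (n:ℝ) ^ (-p)) :=
    Real.summable_nat_rpow.mpr (by linarith)
  have h2 := h.comp_injective (add_left_injective 1)
  simpa [Function.comp_def] using h2

lemma diff_cpow_const {c : ℂ} (hc : c ≠ 0) : Differentiable ℂ fun s : ℂ => c ^ (-s) := by
  have h : (fun s : ℂ => c ^ (-s)) = fun s => Complex.exp (Complex.log c * (-s)) := by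
    funext s; rw [Complex.cpow_def_of_ne_zero hc]
  rw [h]
  exact Complex.differentiable_exp.comp (differentiable_neg.const_mul _)

lemma diff_A (n : ℕ) : Differentiable ℂ fun s : ℂ => A s n := by
  have hc : ((n : ℂ) + 1) ≠ 0 := by
    have : ((n : ℂ) + 1) = ((n + 1 : ℕ) : ℂ) := by push_cast; ring
    rw [this, Ne, Nat.cast_eq_zero]
    omega
  exact (diff_cpow_const hc).const_mul _

lemma A_two_mul (s : ℂ) (m : ℕ) :
    A s (2*m) = -(((2*(m:ℝ)+1 : ℝ) : ℂ) ^ (-s)) := by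
  have h1 : ((-1 : ℂ)) ^ (2*m+1) = -1 := Odd.neg_one_pow ⟨m, by ring⟩
  have h2 : (((2*m : ℕ) : ℂ) + 1) = (((2*(m:ℝ)+1 : ℝ)) : ℂ) := by push_cast; ring
  rw [A, h1, h2]; ring

lemma A_two_mul_add_one (s : ℂ) (m : ℕ) :
    A s (2*m+1) = (((2*(m:ℝ)+2 : ℝ) : ℂ)) ^ (-s) := by
  have h1 : ((-1 : ℂ)) ^ (2*m+1+1) = 1 := Even.neg_one_pow ⟨m+1, by ring⟩
  have h2 : (((2*m+1 : ℕ) : ℂ) + 1) = (((2*(m:ℝ)+2 : ℝ)) : ℂ) := by push_cast; ring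
  rw [A, h1, h2]; ring

/-- MVT bound for the consecutive pair. -/
lemma pair_bound {s : ℂ} (hs : 0 < s.re) (m : ℕ) :
    ‖A s (2*m) + A s (2*m+1)‖ ≤ ‖s‖ * (2*(m:ℝ)+1) ^ (-s.re - 1) := by
  have hsne : s ≠ 0 := fun h => by simp [h] at hs
  set x₁ : ℝ := 2*(m:ℝ)+1 with hx₁
  set x₂ : ℝ := 2*(m:ℝ)+2 with hx₂
  have hx₁pos : (0:ℝ) < x₁ := by positivity
  have hx₁one : (1:ℝ) ≤ x₁ := by rw [hx₁]; nlinarith [Nat.cast_nonneg (α := ℝ) m]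
  have hx12 : x₁ ≤ x₂ := by rw [hx₁, hx₂]; linarith
  set f : ℝ → ℂ := fun y => ((y:ℝ) : ℂ) ^ (-s) with hf
  have hderiv : ∀ x ∈ Set.Icc x₁ x₂, HasDerivWithinAt f (-s * ((x:ℝ):ℂ) ^ (-s-1)) (Set.Icc x₁ x₂) x := by
    intro x hx
    have hxpos : (0:ℝ) < x := lt_of_lt_of_le hx₁pos hx.1
    have h := hasDerivAt_ofReal_cpow_const' hxpos.ne' (r := -s-1)
      (by intro h; apply hsne; have := congrArg (· + 1) h; simpa using by linear_combination -h)
    have h2 := h.const_mul (-s)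
    have heq : (fun y : ℝ => -s * (((y:ℝ):ℂ) ^ (-s-1+1) / (-s-1+1))) = f := by
      funext y
      rw [hf]
      have : (-s-1+1 : ℂ) = -s := by ring
      rw [this]
      field_simp
    rw [heq] at h2
    exact h2.hasDerivWithinAt
  have hbound : ∀ x ∈ Set.Icc x₁ x₂, ‖-s * ((x:ℝ):ℂ) ^ (-s-1)‖ ≤ ‖s‖ * x₁ ^ (-s.re - 1) := by
    intro x hx
    have hxpos : (0:ℝ) < x := lt_of_lt_of_le hx₁pos hx.1
    rw [norm_mul, norm_neg,
      Complex.norm_cpow_eq_rpow_re_of_pos hxpos]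
    have hre : (-s-1).re = -s.re - 1 := by simp
    rw [hre]
    have hmono : x ^ (-s.re - 1) ≤ x₁ ^ (-s.re - 1) :=
      (Real.rpow_le_rpow_iff_of_neg hxpos hx₁pos (by linarith)).mpr hx.1
    exact mul_le_mul_of_nonneg_left hmono (norm_nonneg s)
  have key := (convex_Icc x₁ x₂).norm_image_sub_le_of_norm_hasDerivWithin_le hderiv hbound
    (Set.left_mem_Icc.mpr hx12) (Set.right_mem_Icc.mpr hx12)
  have hAA : A s (2*m) + A s (2*m+1) = f x₂ - f x₁ := by
    rw [A_two_mul, A_two_mul_add_one, hf]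
    simp only [← hx₁, ← hx₂]
    ring
  rw [hAA]
  calc ‖f x₂ - f x₁‖ ≤ ‖s‖ * x₁ ^ (-s.re - 1) * ‖x₂ - x₁‖ := key
    _ = ‖s‖ * x₁ ^ (-s.re - 1) := by
        rw [hx₂, hx₁]
        norm_num

lemma pair_summable {s : ℂ} (hs : 0 < s.re) :
    Summable (fun m : ℕ => A s (2*m) + A s (2*m+1)) := by
  apply Summable.of_norm_bounded (g := fun m : ℕ => ‖s‖ * ((m:ℝ)+1) ^ (-(s.re+1)))
  · exact (summable_rpow_aux (by linarith)).mul_left _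
  · intro m
    refine (pair_bound hs m).trans ?_
    have h1 : ((m:ℝ)+1) ^ (-(s.re+1)) ≥ (2*(m:ℝ)+1) ^ (-s.re-1) := by
      have : (-s.re - 1 : ℝ) = -(s.re+1) := by ring
      rw [this]
      exact (Real.rpow_le_rpow_iff_of_neg (by positivity) (by positivity)
        (by linarith)).mpr (by linarith [Nat.cast_nonneg (α := ℝ) m])
    exact mul_le_mul_of_nonneg_left h1 (norm_nonneg s)

/-- The eta-type function, defined by the pairwise-grouped series, on `re s > 0`. -/
noncomputable def g (s : ℂ) : ℂ := ∑' m : ℕ, (A s (2*m) + A s (2*m+1))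

lemma diff_g : DifferentiableOn ℂ g {s : ℂ | 0 < s.re} := by
  intro z hz
  have hz' : 0 < z.re := hz
  set σ : ℝ := z.re / 2 with hσ
  have hσpos : 0 < σ := by positivity
  set R : ℝ := ‖z‖ + 1 with hR
  set U : Set ℂ := {s : ℂ | σ < s.re} ∩ Metric.ball 0 R with hU
  have hUopen : IsOpen U :=
    ((isOpen_lt continuous_const Complex.continuous_re)).inter Metric.isOpen_ball
  have hzU : z ∈ U := by
    constructor
    · show σ < z.re; rw [hσ]; linarith
    · rw [Metric.mem_ball, dist_zero_right, hR]
      linarith [norm_nonneg z]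
  have hdiff : DifferentiableOn ℂ g U := by
    apply differentiableOn_tsum_of_summable_norm
      (u := fun m : ℕ => R * ((m:ℝ)+1) ^ (-(σ+1)))
    · exact (summable_rpow_aux (by linarith)).mul_left _
    · intro m
      exact ((diff_A (2*m)).add (diff_A (2*m+1))).differentiableOn
    · exact hUopen
    · intro m w hw
      obtain ⟨hw1, hw2⟩ := hw
      have hw1' : σ < w.re := hw1
      have hwre : 0 < w.re := lt_trans hσpos hw1'
      have hwnorm : ‖w‖ ≤ R := by
        have := mem_ball_zero_iff.mp hw2
        linarith
      refine (pair_bound hwre m).trans ?_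
      have hb1 : (1:ℝ) ≤ 2*(m:ℝ)+1 := by nlinarith [Nat.cast_nonneg (α := ℝ) m]
      have h1 : (2*(m:ℝ)+1) ^ (-w.re - 1) ≤ (2*(m:ℝ)+1) ^ (-σ-1) :=
        Real.rpow_le_rpow_of_exponent_le hb1 (by linarith)
      have h2 : (2*(m:ℝ)+1) ^ (-σ-1) ≤ ((m:ℝ)+1) ^ (-(σ+1)) := by
        have he : (-σ - 1 : ℝ) = -(σ+1) := by ring
        rw [he]
        exact (Real.rpow_le_rpow_iff_of_neg (by positivity) (by positivity)
          (by linarith)).mpr (by linarith [Nat.cast_nonneg (α := ℝ) m])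
      calc ‖w‖ * (2*(m:ℝ)+1) ^ (-w.re - 1)
          ≤ R * (2*(m:ℝ)+1) ^ (-w.re - 1) :=
            mul_le_mul_of_nonneg_right hwnorm (Real.rpow_nonneg (by positivity) _)
        _ ≤ R * ((m:ℝ)+1) ^ (-(σ+1)) := by
            apply mul_le_mul_of_nonneg_left (h1.trans h2) (by rw [hR]; positivity)
  exact ((hdiff.differentiableAt (hUopen.mem_nhds hzU)).differentiableWithinAt)

/-- The coefficient function as a periodic function mod 2. -/
noncomputable def Φ : ZMod 2 → ℂ := fun j => if j = 0 then 1 else -1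

lemma Φ_sum : ∑ j, Φ j = 0 := by
  have h : ∑ j, Φ j = Φ 0 + Φ 1 := Fin.sum_univ_two Φ
  rw [h]
  simp [Φ]

lemma Φ_natCast (k : ℕ) : Φ (k : ZMod 2) = (-1 : ℂ) ^ k := by
  rcases Nat.even_or_odd k with ⟨t, ht⟩ | ⟨t, ht⟩
  · have h0 : (k : ZMod 2) = 0 := by
      subst ht; push_cast; ring_nf; simp [show ((2:ZMod 2)) = 0 from rfl]
    rw [h0, Even.neg_one_pow ⟨t, ht⟩]
    simp [Φ]
  · have h1 : (k : ZMod 2) = 1 := by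
      subst ht; push_cast; ring_nf; simp [show ((2:ZMod 2)) = 0 from rfl]
    rw [h1, Odd.neg_one_pow ⟨t, by omega⟩]
    simp [Φ]

lemma term_eq (s : ℂ) (n : ℕ) : LSeries.term (Φ ·) s (n+1) = A s n := by
  rw [LSeries.term_of_ne_zero (Nat.succ_ne_zero n), Φ_natCast, A]
  have : ((n+1 : ℕ) : ℂ) = ((n:ℂ)+1) := by push_cast; ring
  rw [this, Complex.cpow_neg, div_eq_mul_inv]

lemma summable_A {s : ℂ} (hs : 1 < s.re) : Summable (A s) := by
  apply Summable.of_norm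
  simp only [norm_A]
  exact summable_rpow_aux hs

section OneLtRe

variable {s : ℂ} (hs : 1 < s.re)

include hs

lemma g_eq_tsum_A : g s = ∑' n, A s n := by
  have hA := summable_A hs
  have he : Summable (fun m : ℕ => A s (2*m)) :=
    hA.comp_injective (fun x y h => by omega)
  have ho : Summable (fun m : ℕ => A s (2*m+1)) :=
    hA.comp_injective (fun x y h => by omega)
  rw [g, he.tsum_add ho]
  exact tsum_even_add_odd he ho

lemma g_eq_LFunction : g s = ZMod.LFunction Φ s := by
  rw [ZMod.LFunction_eq_LSeries Φ hs, g_eq_tsum_A hs, LSeries]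
  have hsum : Summable (LSeries.term (Φ ·) s) := ZMod.LSeriesSummable_of_one_lt_re Φ hs
  rw [hsum.tsum_eq_zero_add, LSeries.term_zero, zero_add]
  exact (tsum_congr fun n => (term_eq s n)).symm

lemma g_eq_zeta : g s = ((2:ℂ) ^ ((1:ℂ)-s) - 1) * riemannZeta s := by
  set B : ℕ → ℂ := fun n => ((n:ℂ)+1) ^ (-s) with hB
  have hBsum : Summable B := by
    apply Summable.of_norm
    have : ∀ n : ℕ, ‖B n‖ = ((n:ℝ)+1) ^ (-s.re) := by
      intro n
      have hr : (0:ℝ) < (n:ℝ)+1 := by positivity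
      have hbase : ((n : ℂ) + 1) = ((((n:ℝ)+1) : ℝ) : ℂ) := by push_cast; ring
      rw [hB]
      simp only []
      rw [hbase, Complex.norm_cpow_eq_rpow_re_of_pos hr, neg_re]
    simp only [this]
    exact summable_rpow_aux hs
  have hBe : Summable (fun m : ℕ => B (2*m)) := hBsum.comp_injective (fun x y h => by omega)
  have hBo : Summable (fun m : ℕ => B (2*m+1)) := hBsum.comp_injective (fun x y h => by omega)
  have hzeta : riemannZeta s = ∑' n, B n := by
    rw [zeta_eq_tsum_one_div_nat_add_one_cpow hs]
    apply tsum_congr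
    intro n
    rw [hB]
    simp only []
    rw [Complex.cpow_neg, one_div]
  have hBodd : ∀ m : ℕ, B (2*m+1) = (2:ℂ) ^ (-s) * B m := by
    intro m
    have h2 : (((2*m+1 : ℕ) : ℂ) + 1) = (((2:ℝ)) : ℂ) * ((((m:ℝ)+1) : ℝ) : ℂ) := by
      push_cast; ring
    have hm : ((m : ℂ) + 1) = ((((m:ℝ)+1) : ℝ) : ℂ) := by push_cast; ring
    rw [hB]
    simp only []
    rw [h2, hm, mul_cpow_ofReal_nonneg (by norm_num) (by positivity)]
    norm_num
  have hodd_tsum : ∑' m : ℕ, B (2*m+1) = (2:ℂ) ^ (-s) * riemannZeta s := by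
    rw [hzeta]
    calc ∑' m : ℕ, B (2*m+1) = ∑' m : ℕ, (2:ℂ) ^ (-s) * B m := tsum_congr hBodd
      _ = (2:ℂ) ^ (-s) * ∑' m : ℕ, B m := hBsum.tsum_mul_left _
  have heo := tsum_even_add_odd hBe hBo
  have heven_tsum : ∑' m : ℕ, B (2*m) = riemannZeta s - (2:ℂ) ^ (-s) * riemannZeta s := by
    rw [eq_sub_iff_add_eq, ← hodd_tsum, heo, hzeta]
  have hA := summable_A hs
  have hAe : Summable (fun m : ℕ => A s (2*m)) := hA.comp_injective (fun x y h => by omega)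
  have hAo : Summable (fun m : ℕ => A s (2*m+1)) := hA.comp_injective (fun x y h => by omega)
  have hAeB : ∀ m : ℕ, A s (2*m) = -B (2*m) := by
    intro m
    simp only [hB]
    rw [A_two_mul]
    congr 2
    push_cast; ring
  have hAoB : ∀ m : ℕ, A s (2*m+1) = B (2*m+1) := by
    intro m
    simp only [hB]
    rw [A_two_mul_add_one]
    congr 1
    push_cast; ring
  have h2s : (2:ℂ) ^ ((1:ℂ)-s) = 2 * (2:ℂ) ^ (-s) := by
    have : ((1:ℂ) - s) = 1 + (-s) := by ring
    rw [this, Complex.cpow_add _ _ (by norm_num : (2:ℂ) ≠ 0), Complex.cpow_one]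
  rw [g, hAe.tsum_add hAo]
  calc (∑' m : ℕ, A s (2*m)) + ∑' m : ℕ, A s (2*m+1)
      = -(∑' m : ℕ, B (2*m)) + ∑' m : ℕ, B (2*m+1) := by
        rw [← tsum_neg]
        congr 1
        · exact tsum_congr hAeB
        · exact tsum_congr hAoB
    _ = -(riemannZeta s - (2:ℂ) ^ (-s) * riemannZeta s) + (2:ℂ) ^ (-s) * riemannZeta s := by
        rw [heven_tsum, hodd_tsum]
    _ = ((2:ℂ) ^ ((1:ℂ)-s) - 1) * riemannZeta s := by rw [h2s]; ring

end OneLtRe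

end RHaux

open RHaux

theorem rh_implies_new_conjecture
    (RH : ∀ s : ℂ, riemannZeta s = 0 → (∀ n : ℕ, s ≠ -2 * ((n : ℂ) + 1)) → s.re = 1 / 2)
    (a b : ℝ)
    (hcos : Tendsto (fun N : ℕ => ∑ n ∈ Finset.range N,
        ((-1 : ℝ) ^ (n + 1) / ((n : ℝ) + 1) ^ a) * Real.cos (b * Real.log ((n : ℝ) + 1)))
      atTop (𝓝 0))
    (hsin : Tendsto (fun N : ℕ => ∑ n ∈ Finset.range N,
        ((-1 : ℝ) ^ (n + 1) / ((n : ℝ) + 1) ^ a) * Real.sin (b * Real.log ((n : ℝ) + 1)))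
      atTop (𝓝 0)) :
    a = 1 / 2 ∨ a = 1 := by
  set s₀ : ℂ := ↑a - ↑b * I with hs₀
  have hs₀re : s₀.re = a := by simp [hs₀]
  -- complex partial sums tend to 0
  have hS : Tendsto (fun N : ℕ => ∑ n ∈ Finset.range N, A s₀ n) atTop (𝓝 0) := by
    have heq : (fun N : ℕ => ∑ n ∈ Finset.range N, A s₀ n) =
        fun N : ℕ => (↑(∑ n ∈ Finset.range N,
            ((-1:ℝ)^(n+1) / ((n:ℝ)+1)^a) * Real.cos (b * Real.log ((n:ℝ)+1))) : ℂ)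
          + (↑(∑ n ∈ Finset.range N,
            ((-1:ℝ)^(n+1) / ((n:ℝ)+1)^a) * Real.sin (b * Real.log ((n:ℝ)+1))) : ℂ) * I := by
      funext N
      simp only [hs₀, A_eq, Complex.ofReal_sum, Finset.sum_add_distrib, Finset.sum_mul]
    rw [heq]
    have h1 : Tendsto (fun N : ℕ => (↑(∑ n ∈ Finset.range N,
        ((-1:ℝ)^(n+1) / ((n:ℝ)+1)^a) * Real.cos (b * Real.log ((n:ℝ)+1))) : ℂ))
        atTop (𝓝 0) := by
      have h := (Complex.continuous_ofReal.tendsto 0).comp hcos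
      simpa only [Function.comp_def, Complex.ofReal_zero] using h
    have h2 : Tendsto (fun N : ℕ => (↑(∑ n ∈ Finset.range N,
        ((-1:ℝ)^(n+1) / ((n:ℝ)+1)^a) * Real.sin (b * Real.log ((n:ℝ)+1))) : ℂ))
        atTop (𝓝 0) := by
      have h := (Complex.continuous_ofReal.tendsto 0).comp hsin
      simpa only [Function.comp_def, Complex.ofReal_zero] using h
    simpa only [zero_mul, add_zero] using h1.add (h2.mul_const I)
  -- step 0 : a > 0
  have ha : 0 < a := by
    by_contra hcon
    push_neg at hcon
    have hterm : Tendsto (fun n : ℕ => A s₀ n) atTop (𝓝 0) := by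
      have h1 := (hS.comp (tendsto_add_atTop_nat 1)).sub hS
      simp only [Function.comp_def] at h1
      have heq : (fun n : ℕ => (∑ k ∈ Finset.range (n+1), A s₀ k) - ∑ k ∈ Finset.range n, A s₀ k)
          = fun n : ℕ => A s₀ n := by
        funext n; rw [Finset.sum_range_succ]; ring
      rw [heq] at h1
      simpa using h1
    have hnorm : Tendsto (fun n : ℕ => ‖A s₀ n‖) atTop (𝓝 0) := by
      simpa using hterm.norm
    have hev := hnorm.eventually_lt_const (by norm_num : (0:ℝ) < 1)
    obtain ⟨n, hn⟩ := hev.exists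
    rw [norm_A, hs₀re] at hn
    have : (1:ℝ) ≤ ((n:ℝ)+1) ^ (-a) :=
      Real.one_le_rpow (by linarith [Nat.cast_nonneg (α := ℝ) n]) (by linarith)
    linarith
  -- g s₀ = 0
  have hg0 : g s₀ = 0 := by
    have hsum : Summable (fun m : ℕ => A s₀ (2*m) + A s₀ (2*m+1)) :=
      pair_summable (by rw [hs₀re]; exact ha)
    have h1 : Tendsto (fun M : ℕ => ∑ m ∈ Finset.range M, (A s₀ (2*m) + A s₀ (2*m+1)))
        atTop (𝓝 (g s₀)) := hsum.hasSum.tendsto_sum_nat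
    have hpair : ∀ M : ℕ, ∑ m ∈ Finset.range M, (A s₀ (2*m) + A s₀ (2*m+1))
        = ∑ n ∈ Finset.range (2*M), A s₀ n := by
      intro M
      induction M with
      | zero => simp
      | succ M ih =>
        rw [Finset.sum_range_succ, ih, show 2*(M+1) = 2*M+1+1 by ring,
          Finset.sum_range_succ, Finset.sum_range_succ]
        ring
    have h2M : Tendsto (fun M : ℕ => 2*M) atTop atTop :=
      Filter.tendsto_atTop_atTop.mpr fun c => ⟨c, fun m hm => by omega⟩
    have h2 : Tendsto (fun M : ℕ => ∑ m ∈ Finset.range M, (A s₀ (2*m) + A s₀ (2*m+1)))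
        atTop (𝓝 0) := by
      have := hS.comp h2M
      simp only [Function.comp_def] at this
      simpa [hpair] using this
    exact tendsto_nhds_unique h1 h2
  -- identity theorem step 1: g = LFunction Φ on {0 < re}
  have hLF0 : ZMod.LFunction Φ s₀ = 0 := by
    have hU1open : IsOpen {s : ℂ | 0 < s.re} := isOpen_lt continuous_const Complex.continuous_re
    have hg_an : AnalyticOnNhd ℂ g {s : ℂ | 0 < s.re} := diff_g.analyticOnNhd hU1open
    have hLF_an : AnalyticOnNhd ℂ (ZMod.LFunction Φ) {s : ℂ | 0 < s.re} :=
      ((ZMod.differentiable_LFunction_of_sum_zero Φ_sum).differentiableOn).analyticOnNhd hU1open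
    have hpre : IsPreconnected {s : ℂ | 0 < s.re} :=
      (convex_halfSpace_re_gt 0).isPreconnected
    have hmem2 : (2:ℂ) ∈ {s : ℂ | 0 < s.re} := by norm_num
    have hev : g =ᶠ[𝓝 (2:ℂ)] ZMod.LFunction Φ := by
      have hopen : IsOpen {s : ℂ | 1 < s.re} := isOpen_lt continuous_const Complex.continuous_re
      have h2mem : (2:ℂ) ∈ {s : ℂ | 1 < s.re} := by norm_num
      filter_upwards [hopen.mem_nhds h2mem] with s hs
      exact g_eq_LFunction hs
    have := hg_an.eqOn_of_preconnected_of_eventuallyEq hLF_an hpre hmem2 hev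
    have hs₀mem : s₀ ∈ {s : ℂ | 0 < s.re} := by rw [Set.mem_setOf_eq, hs₀re]; exact ha
    rw [← this hs₀mem, hg0]
  -- case s₀ = 1
  by_cases h1 : s₀ = 1
  · right
    have := congrArg Complex.re h1
    rw [hs₀re] at this
    simpa using this
  -- identity theorem step 2: LFunction Φ = (2^(1-s)-1)ζ(s) on {1}ᶜ
  have hzeta0 : ((2:ℂ) ^ ((1:ℂ)-s₀) - 1) * riemannZeta s₀ = 0 := by
    have hUopen : IsOpen ({(1:ℂ)}ᶜ : Set ℂ) := isOpen_compl_singleton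
    have hLF_an : AnalyticOnNhd ℂ (ZMod.LFunction Φ) ({(1:ℂ)}ᶜ : Set ℂ) :=
      ((ZMod.differentiable_LFunction_of_sum_zero Φ_sum).differentiableOn).analyticOnNhd hUopen
    have hF3_an : AnalyticOnNhd ℂ (fun s => ((2:ℂ) ^ ((1:ℂ)-s) - 1) * riemannZeta s) ({(1:ℂ)}ᶜ : Set ℂ) := by
      apply DifferentiableOn.analyticOnNhd _ hUopen
      intro s hs
      apply DifferentiableAt.differentiableWithinAt
      apply DifferentiableAt.mul
      · apply DifferentiableAt.sub_const
        have hd : Differentiable ℂ (fun s : ℂ => (2:ℂ) ^ ((1:ℂ)-s)) := by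
          have h := (diff_cpow_const (show (2:ℂ) ≠ 0 by norm_num)).comp
            (differentiable_id.sub_const (1:ℂ))
          simp only [Function.comp_def, id_eq] at h
          have heq : (fun y : ℂ => (2:ℂ) ^ (-(y-1)))
              = fun s : ℂ => (2:ℂ) ^ ((1:ℂ)-s) := by
            funext t
            congr 1
            ring
          rwa [heq] at h
        exact hd.differentiableAt
      · exact differentiableAt_riemannZeta (by simpa using hs)
    have hpre : IsPreconnected ({(1:ℂ)}ᶜ : Set ℂ) :=
      (isConnected_compl_singleton_of_one_lt_rank (by simp) _).isPreconnected
    have hmem2 : (2:ℂ) ∈ ({(1:ℂ)}ᶜ : Set ℂ) := by norm_num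
    have hev : ZMod.LFunction Φ =ᶠ[𝓝 (2:ℂ)]
        (fun s => ((2:ℂ) ^ ((1:ℂ)-s) - 1) * riemannZeta s) := by
      have hopen : IsOpen {s : ℂ | 1 < s.re} := isOpen_lt continuous_const Complex.continuous_re
      have h2mem : (2:ℂ) ∈ {s : ℂ | 1 < s.re} := by norm_num
      filter_upwards [hopen.mem_nhds h2mem] with s hs
      rw [← g_eq_LFunction hs, g_eq_zeta hs]
    have heq := hLF_an.eqOn_of_preconnected_of_eventuallyEq hF3_an hpre hmem2 hev
    have hs₀mem : s₀ ∈ ({(1:ℂ)}ᶜ : Set ℂ) := by simpa using h1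
    exact ((heq hs₀mem).symm.trans hLF0)
  rcases mul_eq_zero.mp hzeta0 with hcase | hcase
  · -- 2^(1-s₀) = 1, so a = 1
    right
    have h2 : (2:ℂ) ^ ((1:ℂ)-s₀) = 1 := by linear_combination hcase
    have habs := congrArg norm h2
    rw [show ((2:ℂ)) = (((2:ℝ)):ℂ) by norm_num,
      Complex.norm_cpow_eq_rpow_re_of_pos (by norm_num : (0:ℝ) < 2)] at habs
    have hre : ((1:ℂ) - s₀).re = 1 - a := by simp [hs₀re]
    rw [hre] at habs
    simp only [norm_one] at habs
    have hlog := congrArg Real.log habs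
    rw [Real.log_rpow (by norm_num : (0:ℝ) < 2), Real.log_one] at hlog
    have h2ne : Real.log 2 ≠ 0 := (Real.log_pos (by norm_num)).ne'
    have : 1 - a = 0 := by
      rcases mul_eq_zero.mp hlog with h | h
      · exact h
      · exact absurd h h2ne
    linarith
  · -- ζ(s₀) = 0, apply RH
    left
    have hnt : ∀ n : ℕ, s₀ ≠ -2 * ((n : ℂ) + 1) := by
      intro n hn
      have := congrArg Complex.re hn
      rw [hs₀re] at this
      simp at this
      have hn0 : (0:ℝ) ≤ (n:ℝ) := Nat.cast_nonneg n
      nlinarith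
    have := RH s₀ hcase hnt
    rw [hs₀re] at this
    linarith
end
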